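/- arXiv:1501.04396 — 8 statements merged into one kernel-verified Lean document; each statement's English description precedes it below -/
import Mathlib

section
/- If the tensor product X × Y admits perfect state transfer from (w,u) to (z,v) with u ≠ v, then Y admits perfect state transfer from u to v (at some time). -/
open Matrix Kronecker

lemma exp_conj_unitary {k : Type*} [Fintype k] [DecidableEq k]
    (W : Matrix k k ℂ) (hW : W ∈ Matrix.unitaryGroup k ℂ) (M : Matrix k k ℂ) :
    NormedSpace.exp (W * M * star W) = W * NormedSpace.exp M * star W := by
  have h := Matrix.exp_units_conj (Unitary.toUnits (⟨W, hW⟩ : Matrix.unitaryGroup k ℂ)) M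
  simpa using h

lemma exp_unit_conj_diag {k : Type*} [Fintype k] [DecidableEq k]
    (W : Matrix k k ℂ) (hW : W ∈ Matrix.unitaryGroup k ℂ) (e : k → ℂ) (c : ℂ) :
    NormedSpace.exp (c • (W * Matrix.diagonal e * star W))
      = W * Matrix.diagonal (fun i => Complex.exp (c * e i)) * star W := by
  conv_lhs => rw [← Matrix.smul_mul, ← Matrix.mul_smul, ← Matrix.diagonal_smul]
  rw [exp_conj_unitary _ hW, Matrix.exp_diagonal]
  congr 2
  rw [Pi.exp_def]
  funext i
  simp [← Complex.exp_eq_exp_ℂ, smul_eq_mul]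

lemma exp_smul_hermitian {k : Type*} [Fintype k] [DecidableEq k]
    (M : Matrix k k ℂ) (hM : M.IsHermitian) (c : ℂ) :
    NormedSpace.exp (c • M) =
      (hM.eigenvectorUnitary : Matrix k k ℂ) *
        Matrix.diagonal (fun i => Complex.exp (c * hM.eigenvalues i)) *
        star (hM.eigenvectorUnitary : Matrix k k ℂ) := by
  conv_lhs => rw [hM.spectral_theorem, Unitary.conjStarAlgAut_apply]
  exact exp_unit_conj_diag _ (hM.eigenvectorUnitary).2 _ c

lemma isHermitian_ofReal_map {k : Type*} (A : Matrix k k ℝ) (hA : A.IsSymm) :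
    (A.map Complex.ofReal).IsHermitian := by
  ext i j
  simp [Matrix.conjTranspose_apply, Matrix.map_apply, hA.apply i j]

lemma conj_diag_entry {k : Type*} [Fintype k] [DecidableEq k]
    (W : Matrix k k ℂ) (d : k → ℂ) (i j : k) :
    (W * Matrix.diagonal d * star W) i j
      = ∑ r, W i r * d r * star (W j r) := by
  rw [Matrix.mul_apply]
  refine Finset.sum_congr rfl fun r _ => ?_
  rw [Matrix.mul_diagonal]
  simp [Matrix.star_eq_conjTranspose, Matrix.conjTranspose_apply]

lemma unit_conj_diag_mem {k : Type*} [Fintype k] [DecidableEq k]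
    (W : Matrix k k ℂ) (hW : W ∈ Matrix.unitaryGroup k ℂ) (d : k → ℂ)
    (hd : ∀ i, star (d i) * d i = 1) :
    (W * Matrix.diagonal d * star W) ∈ Matrix.unitaryGroup k ℂ := by
  rw [Matrix.mem_unitaryGroup_iff']
  have h1 : star W * W = 1 := Matrix.mem_unitaryGroup_iff'.mp hW
  have h2 : star (W * Matrix.diagonal d * star W)
      = W * Matrix.diagonal (fun i => star (d i)) * star W := by
    rw [StarMul.star_mul, StarMul.star_mul, star_star, ← mul_assoc]
    congr 1
    rw [Matrix.star_eq_conjTranspose, Matrix.diagonal_conjTranspose]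
    rfl
  rw [h2]
  have h3 : W * Matrix.diagonal (fun i => star (d i)) * star W *
      (W * Matrix.diagonal d * star W)
      = W * Matrix.diagonal (fun i => star (d i)) * (star W * W) *
        (Matrix.diagonal d * star W) := by
    simp only [mul_assoc]
  rw [h3, h1, mul_one, mul_assoc, ← mul_assoc (Matrix.diagonal _),
    Matrix.diagonal_mul_diagonal]
  simp only [hd]
  rw [Matrix.diagonal_one, one_mul, Matrix.mem_unitaryGroup_iff.mp hW]

lemma sum_normSq_mulVec_single {k : Type*} [Fintype k] [DecidableEq k]
    (M : Matrix k k ℂ) (hM : M ∈ Matrix.unitaryGroup k ℂ) (u : k) :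
    ∑ y, Complex.normSq (M.mulVec (Pi.single u 1) y) = 1 := by
  have hstar : Mᴴ * M = 1 := by
    rw [← Matrix.star_eq_conjTranspose]; exact Matrix.mem_unitaryGroup_iff'.mp hM
  have key : star (M.mulVec (Pi.single u 1)) ⬝ᵥ (M.mulVec (Pi.single u 1)) = 1 := by
    rw [Matrix.star_mulVec, dotProduct_mulVec, Matrix.vecMul_vecMul,
      hstar, Matrix.vecMul_one]
    simp [dotProduct, Pi.single_apply]
  have h2 : (↑(∑ y, Complex.normSq (M.mulVec (Pi.single u 1) y)) : ℂ)
      = star (M.mulVec (Pi.single u 1)) ⬝ᵥ (M.mulVec (Pi.single u 1)) := by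
    push_cast
    simp [dotProduct, Pi.star_apply, Complex.star_def,
      Complex.normSq_eq_conj_mul_self]
  rw [key] at h2
  exact_mod_cast h2

lemma star_kronecker {l k : Type*} [Fintype l] [Fintype k]
    (U : Matrix l l ℂ) (V : Matrix k k ℂ) :
    star (U ⊗ₖ V) = star U ⊗ₖ star V := by
  ext ⟨i, j⟩ ⟨p, q⟩
  simp [Matrix.star_eq_conjTranspose, Matrix.conjTranspose_apply, mul_comm]

lemma kronecker_mem_unitary {l k : Type*} [Fintype l] [DecidableEq l] [Fintype k] [DecidableEq k]
    (U : Matrix l l ℂ) (hU : U ∈ Matrix.unitaryGroup l ℂ)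
    (V : Matrix k k ℂ) (hV : V ∈ Matrix.unitaryGroup k ℂ) :
    U ⊗ₖ V ∈ Matrix.unitaryGroup (l × k) ℂ := by
  rw [Matrix.mem_unitaryGroup_iff]
  rw [star_kronecker, ← Matrix.mul_kronecker_mul,
    Matrix.mem_unitaryGroup_iff.mp hU, Matrix.mem_unitaryGroup_iff.mp hV,
    Matrix.one_kronecker_one]

lemma kronecker_spectral {l k : Type*} [Fintype l] [DecidableEq l] [Fintype k] [DecidableEq k]
    (Ac : Matrix l l ℂ) (Bc : Matrix k k ℂ) (hAc : Ac.IsHermitian) (hBc : Bc.IsHermitian)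
    (c : ℂ) :
    NormedSpace.exp (c • (Ac ⊗ₖ Bc)) =
      ((hAc.eigenvectorUnitary : Matrix l l ℂ) ⊗ₖ (hBc.eigenvectorUnitary : Matrix k k ℂ)) *
        Matrix.diagonal (fun p : l × k =>
          Complex.exp (c * ((hAc.eigenvalues p.1 : ℂ) * (hBc.eigenvalues p.2 : ℂ)))) *
        star ((hAc.eigenvectorUnitary : Matrix l l ℂ) ⊗ₖ (hBc.eigenvectorUnitary : Matrix k k ℂ)) := by
  have hd : Ac ⊗ₖ Bc =
      ((hAc.eigenvectorUnitary : Matrix l l ℂ) ⊗ₖ (hBc.eigenvectorUnitary : Matrix k k ℂ)) *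
        Matrix.diagonal (fun p : l × k => (hAc.eigenvalues p.1 : ℂ) * (hBc.eigenvalues p.2 : ℂ)) *
        star ((hAc.eigenvectorUnitary : Matrix l l ℂ) ⊗ₖ (hBc.eigenvectorUnitary : Matrix k k ℂ)) := by
    conv_lhs => rw [hAc.spectral_theorem, hBc.spectral_theorem, Unitary.conjStarAlgAut_apply,
      Unitary.conjStarAlgAut_apply]
    rw [Matrix.mul_kronecker_mul, Matrix.mul_kronecker_mul, ← star_kronecker,
      Matrix.diagonal_kronecker_diagonal]
    rfl
  rw [hd, exp_unit_conj_diag _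
    (kronecker_mem_unitary _ (hAc.eigenvectorUnitary).2 _ (hBc.eigenvectorUnitary).2)]

lemma row_sum_normSq {k : Type*} [Fintype k] [DecidableEq k]
    (U : Matrix k k ℂ) (hU : U ∈ Matrix.unitaryGroup k ℂ) (x : k) :
    ∑ r, Complex.normSq (U x r) = 1 := by
  have h := Matrix.mem_unitaryGroup_iff.mp hU
  have h2 := congrFun (congrFun h x) x
  rw [Matrix.mul_apply, Matrix.one_apply_eq] at h2
  have h3 : (↑(∑ r, Complex.normSq (U x r)) : ℂ) = 1 := by
    push_cast
    rw [← h2]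
    refine Finset.sum_congr rfl fun r _ => ?_
    rw [Matrix.star_eq_conjTranspose, Matrix.conjTranspose_apply, Complex.star_def,
      Complex.normSq_eq_conj_mul_self]
    ring
  exact_mod_cast h3

/-- If the tensor product `X × Y` admits perfect state transfer from `(w,u)` to
`(z,v)` with `u ≠ v`, then `Y` admits perfect state transfer from `u` to `v`
at some time. -/
theorem stmt_7 {m n : Type*} [Fintype m] [DecidableEq m] [Fintype n] [DecidableEq n]
    (A : Matrix m m ℝ) (B : Matrix n n ℝ) (hA : A.IsSymm) (hB : B.IsSymm)
    (w z : m) (u v : n) (huv : u ≠ v) (τ : ℝ) (hτ : 0 < τ)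
    (lam : ℂ) (hlam : ‖lam‖ = 1)
    (hpst : (NormedSpace.exp ((Complex.I * (τ : ℂ)) • (A ⊗ₖ B).map Complex.ofReal)).mulVec
        (Pi.single (w, u) 1 : m × n → ℂ) = lam • (Pi.single (z, v) 1 : m × n → ℂ)) :
    ∃ (t : ℝ) (μ : ℂ), ‖μ‖ = 1 ∧
      (NormedSpace.exp ((Complex.I * (t : ℂ)) • B.map Complex.ofReal)).mulVec
        (Pi.single u 1 : n → ℂ) = μ • (Pi.single v 1 : n → ℂ) := by
  classical
  set Ac : Matrix m m ℂ := A.map Complex.ofReal with hAcdef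
  set Bc : Matrix n n ℂ := B.map Complex.ofReal with hBcdef
  have hAc : Ac.IsHermitian := isHermitian_ofReal_map A hA
  have hBc : Bc.IsHermitian := isHermitian_ofReal_map B hB
  set U : Matrix m m ℂ := (hAc.eigenvectorUnitary : Matrix m m ℂ) with hUdef
  set V : Matrix n n ℂ := (hBc.eigenvectorUnitary : Matrix n n ℂ) with hVdef
  set a : m → ℝ := hAc.eigenvalues with hadef
  set b : n → ℝ := hBc.eigenvalues with hbdef
  have hUu : U ∈ Matrix.unitaryGroup m ℂ := (hAc.eigenvectorUnitary).2
  have hVu : V ∈ Matrix.unitaryGroup n ℂ := (hBc.eigenvectorUnitary).2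
  -- the single-factor evolution
  set E : ℝ → Matrix n n ℂ :=
    fun t => NormedSpace.exp ((Complex.I * (t : ℂ)) • Bc) with hEdef
  have hEform : ∀ t : ℝ, E t =
      V * Matrix.diagonal (fun s => Complex.exp (Complex.I * t * b s)) * star V := by
    intro t
    rw [hEdef]
    simpa [mul_assoc] using exp_smul_hermitian Bc hBc (Complex.I * t)
  have hEd : ∀ (t : ℝ) (s : n),
      star (Complex.exp (Complex.I * t * b s)) * Complex.exp (Complex.I * t * b s) = 1 := by
    intro t s
    rw [Complex.star_def, ← Complex.exp_conj]
    have : (starRingEnd ℂ) (Complex.I * t * b s) = -(Complex.I * t * b s) := by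
      simp only [_root_.map_mul, Complex.conj_I, Complex.conj_ofReal]
      ring
    rw [this, ← Complex.exp_add, neg_add_cancel, Complex.exp_zero]
  have hEunit : ∀ t : ℝ, E t ∈ Matrix.unitaryGroup n ℂ := by
    intro t
    rw [hEform t]
    exact unit_conj_diag_mem _ hVu _ (hEd t)
  -- the transferred state
  set ψ : ℝ → n → ℂ := fun t => (E t).mulVec (Pi.single u 1) with hψdef
  have hψentry : ∀ (t : ℝ) (y : n),
      ψ t y = ∑ s, V y s * Complex.exp (Complex.I * t * b s) * star (V u s) := by
    intro t y
    rw [hψdef]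
    simp only [hEform t, Matrix.mulVec_single_one, Matrix.col_apply]
    exact conj_diag_entry V _ y u
  have hψnorm : ∀ t : ℝ, ∑ y, Complex.normSq (ψ t y) = 1 := fun t =>
    sum_normSq_mulVec_single _ (hEunit t) u
  -- coefficients from the X factor
  set c : m → ℂ := fun r => U z r * star (U w r) with hcdef
  -- main identity
  have hyp : ∀ y : n, ∑ r, c r * ψ (τ * a r) y
      = lam * (Pi.single v 1 : n → ℂ) y := by
    intro y
    have h0 := congrFun hpst (z, y)
    have hbridge : (A ⊗ₖ B).map Complex.ofReal = Ac ⊗ₖ Bc := by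
      ext ⟨i, j⟩ ⟨p, q⟩
      simp [Matrix.map_apply, Matrix.kroneckerMap_apply, hAcdef, hBcdef]
    rw [hbridge, kronecker_spectral Ac Bc hAc hBc (Complex.I * τ)] at h0
    simp only [Matrix.mulVec_single_one, Matrix.col_apply, Pi.smul_apply, smul_eq_mul] at h0
    rw [conj_diag_entry] at h0
    rw [Fintype.sum_prod_type] at h0
    have hL : ∑ r, ∑ s, (U ⊗ₖ V) (z, y) (r, s) *
          Complex.exp (Complex.I * τ * ((a r : ℂ) * (b s : ℂ))) *
          star ((U ⊗ₖ V) (w, u) (r, s))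
        = ∑ r, c r * ψ (τ * a r) y := by
      refine Finset.sum_congr rfl fun r _ => ?_
      rw [hψentry, Finset.mul_sum]
      refine Finset.sum_congr rfl fun s _ => ?_
      have hexp : Complex.I * (τ : ℂ) * ((a r : ℂ) * (b s : ℂ))
          = Complex.I * ((τ * a r : ℝ) : ℂ) * (b s : ℂ) := by
        push_cast; ring
      simp only [Matrix.kroneckerMap_apply, hexp, hcdef, star_mul']
      ring
    rw [hL] at h0
    rw [h0]
    simp [Pi.single_apply, Prod.ext_iff]
  -- real quantities
  set F : m → ℝ := fun r => ‖c r‖ with hFdef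
  set G : m → ℝ := fun r => ‖ψ (τ * a r) v‖ with hGdef
  have hFnonneg : ∀ r, 0 ≤ F r := fun r => norm_nonneg _
  have hGnonneg : ∀ r, 0 ≤ G r := fun r => norm_nonneg _
  have hGle : ∀ r, G r ≤ 1 := by
    intro r
    have h1 : Complex.normSq (ψ (τ * a r) v) ≤ 1 := by
      rw [← hψnorm (τ * a r)]
      exact Finset.single_le_sum (fun y _ => Complex.normSq_nonneg _) (Finset.mem_univ v)
    have h2 : G r ^ 2 = Complex.normSq (ψ (τ * a r) v) := Complex.sq_norm _
    nlinarith [hGnonneg r]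
  have hFle : ∑ r, F r ≤ 1 := by
    have hcs := Finset.sum_mul_sq_le_sq_mul_sq Finset.univ
      (fun r => ‖U z r‖) (fun r => ‖U w r‖)
    have hz : ∑ r, ‖U z r‖ ^ 2 = 1 := by
      rw [← row_sum_normSq U hUu z]
      exact Finset.sum_congr rfl fun r _ => Complex.sq_norm _
    have hw : ∑ r, ‖U w r‖ ^ 2 = 1 := by
      rw [← row_sum_normSq U hUu w]
      exact Finset.sum_congr rfl fun r _ => Complex.sq_norm _
    have hFeq : ∀ r, F r = ‖U z r‖ * ‖U w r‖ := by
      intro r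
      rw [hFdef]
      show ‖U z r * star (U w r)‖ = _
      rw [norm_mul, Complex.star_def, Complex.norm_conj]
    rw [hz, hw, one_mul] at hcs
    have hsum : ∑ r, F r = ∑ r, ‖U z r‖ * ‖U w r‖ :=
      Finset.sum_congr rfl fun r _ => hFeq r
    have hnn : 0 ≤ ∑ r, ‖U z r‖ * ‖U w r‖ :=
      Finset.sum_nonneg fun r _ => mul_nonneg (norm_nonneg _) (norm_nonneg _)
    nlinarith
  have hlow : 1 ≤ ∑ r, F r * G r := by
    have h1 := hyp v
    simp only [Pi.single_eq_same, mul_one] at h1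
    have h2 : ‖lam‖ ≤ ∑ r, F r * G r := by
      rw [← h1]
      refine le_trans (norm_sum_le _ _) ?_
      refine le_of_eq (Finset.sum_congr rfl fun r _ => ?_)
      exact norm_mul _ _
    rwa [hlam] at h2
  -- each term with nonzero coefficient has G = 1
  have hterms : ∀ r ∈ Finset.univ, F r * (1 - G r) = 0 := by
    have hsum0 : ∑ r, F r * (1 - G r) = 0 := by
      have hle : ∑ r, F r * (1 - G r) ≤ 0 := by
        have : ∑ r, F r * (1 - G r) = (∑ r, F r) - ∑ r, F r * G r := by
          rw [← Finset.sum_sub_distrib]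
          exact Finset.sum_congr rfl fun r _ => by ring
        rw [this]; linarith
      have hge : 0 ≤ ∑ r, F r * (1 - G r) :=
        Finset.sum_nonneg fun r _ => mul_nonneg (hFnonneg r) (by linarith [hGle r])
      linarith
    exact (Finset.sum_eq_zero_iff_of_nonneg
      (fun r _ => mul_nonneg (hFnonneg r) (by linarith [hGle r]))).mp hsum0
  -- there is a nonzero coefficient
  have hex : ∃ r, c r ≠ 0 := by
    by_contra hall
    push_neg at hall
    have h1 := hyp v
    simp only [Pi.single_eq_same, mul_one] at h1
    rw [Finset.sum_eq_zero (fun r _ => by rw [hall r, zero_mul])] at h1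
    rw [← h1] at hlam
    simp at hlam
  obtain ⟨r0, hr0⟩ := hex
  have hF0 : F r0 ≠ 0 := by
    rw [hFdef]
    simpa using hr0
  have hG0 : G r0 = 1 := by
    have := hterms r0 (Finset.mem_univ r0)
    rcases mul_eq_zero.mp this with h | h
    · exact absurd h hF0
    · linarith
  -- conclude
  refine ⟨τ * a r0, ψ (τ * a r0) v, hG0, ?_⟩
  have hnormv : Complex.normSq (ψ (τ * a r0) v) = 1 := by
    have hG0' : ‖ψ (τ * a r0) v‖ = 1 := hG0
    rw [← Complex.sq_norm, hG0']; norm_num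
  have hzero : ∀ y, y ≠ v → ψ (τ * a r0) y = 0 := by
    intro y hy
    have hsplit := hψnorm (τ * a r0)
    rw [← Finset.add_sum_erase _ _ (Finset.mem_univ v), hnormv] at hsplit
    have hszero : ∑ y ∈ Finset.univ.erase v, Complex.normSq (ψ (τ * a r0) y) = 0 := by
      linarith
    have := (Finset.sum_eq_zero_iff_of_nonneg
      (fun y _ => Complex.normSq_nonneg _)).mp hszero y
      (Finset.mem_erase.mpr ⟨hy, Finset.mem_univ y⟩)
    exact Complex.normSq_eq_zero.mp this
  funext y
  show ψ (τ * a r0) y = (ψ (τ * a r0) v • (Pi.single v 1 : n → ℂ)) y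
  by_cases hy : y = v
  · subst hy
    simp
  · rw [hzero y hy]
    simp [Pi.smul_apply, Pi.single_apply, hy]
end

section
/- If the tensor product X × Y admits perfect state transfer from (w,u) to (z,u) (same second coordinate), then Y is periodic at u, i.e., there is a time t > 0 and unimodular μ with exp(itA(Y)) e_u = μ e_u. -/
open Matrix Kronecker
open scoped Nat
set_option maxHeartbeats 1000000

/-- If `P` intertwines `M` and `M'`, it intertwines their exponentials. -/
lemma stmt8_mul_exp {p q : Type*} [Fintype p] [DecidableEq p] [Fintype q] [DecidableEq q]
    (P : Matrix q p ℂ) (M : Matrix p p ℂ) (M' : Matrix q q ℂ) (h : P * M = M' * P) :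
    P * NormedSpace.exp M = NormedSpace.exp M' * P := by
  have hpow : ∀ k : ℕ, P * M ^ k = M' ^ k * P := by
    intro k
    induction k with
    | zero => simp
    | succ k ih => rw [pow_succ, pow_succ, ← Matrix.mul_assoc, ih, Matrix.mul_assoc, h,
        ← Matrix.mul_assoc]
  have hs : Summable fun k : ℕ => (k !⁻¹ : ℂ) • M ^ k := by
    letI : SeminormedRing (Matrix p p ℂ) := Matrix.linftyOpSemiNormedRing
    letI : NormedRing (Matrix p p ℂ) := Matrix.linftyOpNormedRing
    letI : NormedAlgebra ℂ (Matrix p p ℂ) := Matrix.linftyOpNormedAlgebra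
    exact NormedSpace.expSeries_summable' M
  have hs' : Summable fun k : ℕ => (k !⁻¹ : ℂ) • M' ^ k := by
    letI : SeminormedRing (Matrix q q ℂ) := Matrix.linftyOpSemiNormedRing
    letI : NormedRing (Matrix q q ℂ) := Matrix.linftyOpNormedRing
    letI : NormedAlgebra ℂ (Matrix q q ℂ) := Matrix.linftyOpNormedAlgebra
    exact NormedSpace.expSeries_summable' M'
  let L : Matrix p p ℂ →L[ℂ] Matrix q p ℂ :=
    { toFun := fun X => P * X
      map_add' := fun X Y => Matrix.mul_add P X Y
      map_smul' := fun c X => Matrix.mul_smul P c X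
      cont := continuous_const.matrix_mul continuous_id }
  let R : Matrix q q ℂ →L[ℂ] Matrix q p ℂ :=
    { toFun := fun X => X * P
      map_add' := fun X Y => Matrix.add_mul X Y P
      map_smul' := fun c X => Matrix.smul_mul c X P
      cont := continuous_id.matrix_mul continuous_const }
  have h1 : P * NormedSpace.exp M = ∑' k : ℕ, (k !⁻¹ : ℂ) • (P * M ^ k) := by
    rw [NormedSpace.exp_eq_tsum ℂ]
    simpa only [L, ContinuousLinearMap.coe_mk', LinearMap.coe_mk, AddHom.coe_mk,
      Matrix.mul_smul] using L.map_tsum hs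
  have h2 : NormedSpace.exp M' * P = ∑' k : ℕ, (k !⁻¹ : ℂ) • (M' ^ k * P) := by
    rw [NormedSpace.exp_eq_tsum ℂ]
    simpa only [R, ContinuousLinearMap.coe_mk', LinearMap.coe_mk, AddHom.coe_mk,
      Matrix.smul_mul] using R.map_tsum hs'
  rw [h1, h2]
  exact tsum_congr fun k => by rw [hpow]


/-- If the tensor product `X × Y` admits perfect state transfer from `(w,u)` to
`(z,u)` (same second coordinate), and some nonzero eigenvalue of `A(X)` has an
eigenvector not orthogonal to `e_w`, then `Y` is periodic at `u`: there is a
time `t > 0` and unimodular `μ` with `exp(itA(Y)) e_u = μ e_u`. -/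
theorem stmt_8 {m n : Type*} [Fintype m] [DecidableEq m] [Fintype n] [DecidableEq n]
    (A : Matrix m m ℝ) (B : Matrix n n ℝ) (hA : A.IsSymm) (hB : B.IsSymm)
    (w z : m) (u : n) (hwz : w ≠ z) (τ : ℝ) (hτ : 0 < τ)
    (hsupp : ∃ θ : ℝ, θ ≠ 0 ∧ ∃ x : m → ℝ,
      A.mulVec x = θ • x ∧ dotProduct x (Pi.single w 1) ≠ 0)
    (lam : ℂ) (hlam : ‖lam‖ = 1)
    (hpst : (NormedSpace.exp ((Complex.I * (τ : ℂ)) • (A ⊗ₖ B).map Complex.ofReal)).mulVec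
        (Pi.single (w, u) 1 : m × n → ℂ) = lam • (Pi.single (z, u) 1 : m × n → ℂ)) :
    ∃ t : ℝ, 0 < t ∧ ∃ μ : ℂ, ‖μ‖ = 1 ∧
      (NormedSpace.exp ((Complex.I * (t : ℂ)) • B.map Complex.ofReal)).mulVec
        (Pi.single u 1 : n → ℂ) = μ • (Pi.single u 1 : n → ℂ) := by
  obtain ⟨θ, hθ, x, hx, hxw⟩ := hsupp
  rw [dotProduct_single, mul_one] at hxw
  have hxw' : (x w : ℂ) ≠ 0 := by exact_mod_cast hxw
  set Bc : Matrix n n ℂ := B.map Complex.ofReal with hBcdef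
  set M : Matrix (m × n) (m × n) ℂ :=
    (Complex.I * (τ : ℂ)) • (A ⊗ₖ B).map Complex.ofReal with hMdef
  set M' : Matrix n n ℂ := (Complex.I * ((τ * θ : ℝ) : ℂ)) • Bc with hM'def
  set P : Matrix n (m × n) ℂ :=
    Matrix.of (fun j p => (x p.1 : ℂ) * (if p.2 = j then 1 else 0)) with hPdef
  -- row-vector eigen equation
  have keyR : ∀ i' : m, ∑ i, x i * A i i' = θ * x i' := by
    intro i'
    have h1 := congrFun hx i'
    simp only [Matrix.mulVec, dotProduct, Pi.smul_apply, smul_eq_mul] at h1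
    rw [← h1]
    exact Finset.sum_congr rfl fun i _ => by rw [mul_comm, hA.apply i' i]
  have key : ∀ i' : m, ∑ i, (x i : ℂ) * ((A i i' : ℝ) : ℂ) = ((θ * x i' : ℝ) : ℂ) := by
    intro i'
    have := congrArg (Complex.ofReal) (keyR i')
    push_cast at this ⊢
    exact this
  -- intertwining
  have hint : P * M = M' * P := by
    ext j pk
    obtain ⟨i', k'⟩ := pk
    simp only [hPdef, hMdef, hM'def, hBcdef, Matrix.mul_apply, Fintype.sum_prod_type,
      Matrix.of_apply, Matrix.smul_apply, Matrix.map_apply, Matrix.kroneckerMap_apply,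
      smul_eq_mul, mul_ite, ite_mul, mul_one, mul_zero, zero_mul, one_mul,
      Finset.sum_ite_eq', Finset.sum_ite_eq, Finset.mem_univ, if_true]
    have e1 : ∀ i : m, (x i : ℂ) * (Complex.I * (τ : ℂ) * ((A i i' * B j k' : ℝ) : ℂ))
        = (Complex.I * (τ : ℂ) * ((B j k' : ℝ) : ℂ)) * ((x i : ℂ) * ((A i i' : ℝ) : ℂ)) := by
      intro i; push_cast; ring
    rw [Finset.sum_congr rfl fun i _ => e1 i, ← Finset.mul_sum, key i']
    push_cast
    ring
  have hPE := stmt8_mul_exp P M M' hint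
  -- P applied to basis vectors
  have hPe : ∀ (a : m) (b : n),
      P.mulVec (Pi.single (a, b) (1 : ℂ)) = (x a : ℂ) • (Pi.single b 1 : n → ℂ) := by
    intro a b
    ext j
    simp only [hPdef, Matrix.mulVec_single, Matrix.of_apply, mul_one, Pi.smul_apply,
      Pi.single_apply, smul_eq_mul]
    by_cases hj : b = j <;> simp [hj, eq_comm]
  set eu : n → ℂ := Pi.single u 1 with heu
  have h3 : (x w : ℂ) • (NormedSpace.exp M').mulVec eu = (lam * (x z : ℂ)) • eu := by
    have step := congrArg (fun v => P.mulVec v) hpst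
    simp only [Matrix.mulVec_mulVec] at step
    calc (x w : ℂ) • (NormedSpace.exp M').mulVec eu
        = (NormedSpace.exp M').mulVec ((x w : ℂ) • eu) := (Matrix.mulVec_smul _ _ _).symm
      _ = (NormedSpace.exp M').mulVec (P.mulVec (Pi.single (w, u) 1)) := by rw [hPe w u]
      _ = (NormedSpace.exp M' * P).mulVec (Pi.single (w, u) 1) := Matrix.mulVec_mulVec _ _ _
      _ = (P * NormedSpace.exp M).mulVec (Pi.single (w, u) 1) := by rw [hPE]
      _ = P.mulVec (lam • (Pi.single (z, u) 1 : m × n → ℂ)) := by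
            rw [← Matrix.mulVec_mulVec]; exact congrArg _ hpst
      _ = lam • P.mulVec (Pi.single (z, u) 1) := Matrix.mulVec_smul _ _ _
      _ = lam • ((x z : ℂ) • eu) := by rw [hPe z u]
      _ = (lam * (x z : ℂ)) • eu := (smul_smul _ _ _)
  set μ₀ : ℂ := (x w : ℂ)⁻¹ * (lam * (x z : ℂ)) with hμ₀
  have hE'u : (NormedSpace.exp M').mulVec eu = μ₀ • eu := by
    have := congrArg (fun v => (x w : ℂ)⁻¹ • v) h3
    simpa only [smul_smul, inv_mul_cancel₀ hxw', one_smul] using this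
  -- conjugate transpose of M'
  have hMH : M'ᴴ = -M' := by
    ext j k
    simp only [hM'def, hBcdef, Matrix.conjTranspose_apply, Matrix.smul_apply, Matrix.map_apply,
      Matrix.neg_apply, smul_eq_mul, star_mul', Complex.star_def, _root_.map_mul, Complex.conj_I,
      Complex.conj_ofReal]
    rw [hB.apply j k]
    ring
  have hcomm : Commute (-M') M' := (Commute.refl M').neg_left
  have hinv : NormedSpace.exp (-M') * NormedSpace.exp M' = 1 := by
    rw [← Matrix.exp_add_of_commute _ _ hcomm, neg_add_cancel, NormedSpace.exp_zero]
  have hEH : (NormedSpace.exp M')ᴴ = NormedSpace.exp (-M') := by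
    rw [← Matrix.exp_conjTranspose, hMH]
  have hstar_eu : star eu = eu := by
    ext j
    simp [heu, Pi.single_apply, apply_ite]
  -- unimodularity of μ₀
  have hunit : (starRingEnd ℂ) μ₀ * μ₀ = 1 := by
    have lhs1 : dotProduct (star ((NormedSpace.exp M').mulVec eu))
        ((NormedSpace.exp M').mulVec eu) = (starRingEnd ℂ) μ₀ * μ₀ := by
      rw [hE'u]
      have : star (μ₀ • eu) = (starRingEnd ℂ) μ₀ • eu := by
        rw [star_smul, hstar_eu]; rfl
      rw [this, smul_dotProduct, dotProduct_smul, smul_eq_mul, smul_eq_mul,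
        heu, dotProduct_single, Pi.single_eq_same, mul_one, mul_assoc]
      rw [hμ₀]
      ring
    have lhs2 : dotProduct (star ((NormedSpace.exp M').mulVec eu))
        ((NormedSpace.exp M').mulVec eu) = 1 := by
      rw [Matrix.star_mulVec, dotProduct_mulVec, Matrix.vecMul_vecMul, hEH, hinv,
        Matrix.vecMul_one, hstar_eu, heu, dotProduct_single, Pi.single_eq_same, mul_one]
    rw [← lhs1, lhs2]
  have habs : ‖μ₀‖ = 1 := by
    have h1 : Complex.normSq μ₀ = 1 := by
      have := hunit
      rw [mul_comm, Complex.mul_conj] at this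
      exact_mod_cast this
    have h2 : ‖μ₀‖ ^ 2 = 1 := by
      rw [Complex.sq_norm, h1]
    nlinarith [norm_nonneg μ₀]
  have hμ₀ne : μ₀ ≠ 0 := by
    intro h0
    rw [h0, norm_zero] at habs
    norm_num at habs
  rcases hθ.lt_or_gt with hneg | hpos
  · -- θ < 0 : take t = -(τ * θ)
    refine ⟨-(τ * θ), by nlinarith, μ₀⁻¹, by rw [norm_inv, habs, inv_one], ?_⟩
    have hcoef : (Complex.I * ((-(τ * θ) : ℝ) : ℂ)) • Bc = -M' := by
      rw [hM'def, ← neg_smul]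
      congr 1
      push_cast
      ring
    have hminus : (NormedSpace.exp (-M')).mulVec eu = μ₀⁻¹ • eu := by
      have step : (NormedSpace.exp (-M')).mulVec ((NormedSpace.exp M').mulVec eu) = eu := by
        rw [Matrix.mulVec_mulVec, hinv, Matrix.one_mulVec]
      rw [hE'u, Matrix.mulVec_smul] at step
      have := congrArg (fun v => μ₀⁻¹ • v) step
      simpa only [smul_smul, inv_mul_cancel₀ hμ₀ne, one_smul] using this
    rw [hcoef]
    exact hminus
  · -- θ > 0 : take t = τ * θ
    refine ⟨τ * θ, by positivity, μ₀, habs, ?_⟩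
    rw [← hM'def]
    exact hE'u
end

section
/- Suppose A(X) = B ⊗ C + M ⊗ N where B, M are commuting symmetric m×m matrices. If X admits perfect state transfer from (w,u) to (z,v) at time τ, then for every common rank-1 spectral projector E_r of B and M, we have e_r^T P^T e_w = ± e_r^T P^T e_z, i.e., w and z are strongly cospectral with respect to B and M. -/
open Matrix Kronecker

/-- Suppose `A(X) = B ⊗ C + M ⊗ N` where `B, M` are commuting symmetric `m×m`
matrices simultaneously diagonalized by the orthogonal matrix `P`. If `X`
admits perfect state transfer from `(w,u)` to `(z,v)` at time `τ`, then for
every index `r`, `(Pᵀ e_w)_r = ± (Pᵀ e_z)_r`, i.e. `w` and `z` are strongly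
cospectral with respect to `B` and `M`. -/
theorem stmt_9 {m n : Type*} [Fintype m] [DecidableEq m] [Fintype n] [DecidableEq n]
    (B M : Matrix m m ℝ) (hB : B.IsSymm) (hM : M.IsSymm) (hBM : B * M = M * B)
    (C N : Matrix n n ℝ) (hC : C.IsSymm) (hN : N.IsSymm)
    (P : Matrix m m ℝ) (hP : P ∈ Matrix.orthogonalGroup m ℝ)
    (β μ : m → ℝ)
    (hPB : Pᵀ * B * P = Matrix.diagonal β)
    (hPM : Pᵀ * M * P = Matrix.diagonal μ)
    (w z : m) (u v : n) (τ : ℝ) (lam : ℂ) (hlam : ‖lam‖ = 1)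
    (hpst : (NormedSpace.exp
        ((Complex.I * (τ : ℂ)) • (B ⊗ₖ C + M ⊗ₖ N).map Complex.ofReal)).mulVec
        (Pi.single (w, u) 1 : m × n → ℂ) = lam • (Pi.single (z, v) 1 : m × n → ℂ)) :
    ∀ r : m, Pᵀ.mulVec (Pi.single w 1) r = Pᵀ.mulVec (Pi.single z 1) r ∨
      Pᵀ.mulVec (Pi.single w 1) r = - Pᵀ.mulVec (Pi.single z 1) r := by
  intro r
  have hPtP : Pᵀ * P = 1 := by
    have := (Matrix.mem_orthogonalGroup_iff' m ℝ).mp hP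
    simpa [Matrix.star_eq_conjTranspose] using this
  have hPPt : P * Pᵀ = 1 := by
    have := (Matrix.mem_orthogonalGroup_iff m ℝ).mp hP
    simpa [Matrix.star_eq_conjTranspose] using this
  set p : m → ℝ := fun i => P i r with hp
  -- reduce goal to squares
  have hgw : Pᵀ.mulVec (Pi.single w 1) r = p w := by
    simp [Matrix.mulVec, dotProduct, Pi.single_apply, hp]
  have hgz : Pᵀ.mulVec (Pi.single z 1) r = p z := by
    simp [Matrix.mulVec, dotProduct, Pi.single_apply, hp]
  rw [hgw, hgz, ← sq_eq_sq_iff_eq_or_eq_neg]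
  -- eigenvector facts
  have heig : ∀ (A : Matrix m m ℝ) (d : m → ℝ), A.IsSymm → Pᵀ * A * P = Matrix.diagonal d →
      A.mulVec p = d r • p := by
    intro A d hA hPA
    have hAP : A * P = P * Matrix.diagonal d := by
      calc A * P = (P * Pᵀ) * (A * P) := by rw [hPPt, one_mul]
        _ = P * (Pᵀ * A * P) := by simp only [Matrix.mul_assoc]
        _ = P * Matrix.diagonal d := by rw [hPA]
    funext i
    have h1 := congrFun (congrFun hAP i) r
    rw [Matrix.mul_diagonal] at h1
    simpa [Matrix.mulVec, dotProduct, Matrix.mul_apply, hp, mul_comm] using h1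
  have hBp := heig B β hB hPB
  have hMp := heig M μ hM hPM
  -- projector F commutes with B and M
  set F : Matrix m m ℝ := Matrix.vecMulVec p p with hF
  have hcomm : ∀ (A : Matrix m m ℝ) (d : m → ℝ), A.IsSymm → A.mulVec p = d r • p →
      F * A = A * F := by
    intro A d hA hAp
    have h1 : F * A = d r • F := by
      ext i j
      have hj : ∑ k, A j k * p k = d r * p j := by
        have := congrFun hAp j
        simpa [Matrix.mulVec, dotProduct] using this
      simp only [Matrix.mul_apply, Matrix.vecMulVec_apply, hF, Matrix.smul_apply,
        smul_eq_mul]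
      calc ∑ k, p i * p k * A k j = p i * ∑ k, A j k * p k := by
            rw [Finset.mul_sum]; congr 1; funext k; rw [hA.apply k j]; ring
        _ = d r * (p i * p j) := by rw [hj]; ring
    have h2 : A * F = d r • F := by
      ext i j
      have hi : ∑ k, A i k * p k = d r * p i := by
        have := congrFun hAp i
        simpa [Matrix.mulVec, dotProduct] using this
      simp only [Matrix.mul_apply, Matrix.vecMulVec_apply, hF, Matrix.smul_apply,
        smul_eq_mul]
      calc ∑ k, A i k * (p k * p j) = (∑ k, A i k * p k) * p j := by
            rw [Finset.sum_mul]; congr 1; funext k; ring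
        _ = d r * (p i * p j) := by rw [hi]; ring
    rw [h1, h2]
  have hFB := hcomm B β hB hBp
  have hFM := hcomm M μ hM hMp
  -- the complex matrices
  set S : Matrix (m × n) (m × n) ℂ := (B ⊗ₖ C + M ⊗ₖ N).map Complex.ofReal with hS
  set G : Matrix (m × n) (m × n) ℂ := (F ⊗ₖ (1 : Matrix n n ℝ)).map Complex.ofReal with hG
  have hmapmul : ∀ (X Y : Matrix (m × n) (m × n) ℝ),
      (X * Y).map Complex.ofReal = X.map Complex.ofReal * Y.map Complex.ofReal := by
    intro X Y
    ext ij kl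
    simp only [Matrix.mul_apply, Matrix.map_apply]
    push_cast
    rfl
  have hGS : G * S = S * G := by
    have hreal : (F ⊗ₖ (1 : Matrix n n ℝ)) * (B ⊗ₖ C + M ⊗ₖ N)
        = (B ⊗ₖ C + M ⊗ₖ N) * (F ⊗ₖ (1 : Matrix n n ℝ)) := by
      rw [Matrix.mul_add, Matrix.add_mul, ← Matrix.mul_kronecker_mul, ← Matrix.mul_kronecker_mul,
        ← Matrix.mul_kronecker_mul, ← Matrix.mul_kronecker_mul, hFB, hFM, one_mul, mul_one,
        one_mul, mul_one]
    rw [hG, hS, ← hmapmul, ← hmapmul, hreal]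
  set X : Matrix (m × n) (m × n) ℂ := (Complex.I * (τ : ℂ)) • S with hX
  have hGX : Commute X G := by
    exact (Commute.smul_left (hGS.symm) _)
  set U : Matrix (m × n) (m × n) ℂ := NormedSpace.exp X with hU
  have hUG : G * U = U * G := hGX.exp_left.symm.symm.eq.symm
  -- unitarity
  have hSH : Sᴴ = S := by
    ext ij kl
    rcases ij with ⟨i, j⟩; rcases kl with ⟨k, l⟩
    simp only [hS, Matrix.conjTranspose_apply, Matrix.map_apply, Matrix.add_apply,
      Matrix.kronecker_apply, Complex.star_def, Complex.conj_ofReal]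
    rw [hB.apply k i, hC.apply l j, hM.apply k i, hN.apply l j]
  have hXH : Xᴴ = -X := by
    rw [hX, Matrix.conjTranspose_smul, hSH]
    rw [← neg_smul]
    congr 1
    simp [Complex.ext_iff]
  have hUnit : Uᴴ * U = 1 := by
    rw [hU, ← Matrix.exp_conjTranspose, hXH, ← Matrix.exp_add_of_commute _ _
      (Commute.neg_left (Commute.refl X)), neg_add_cancel, NormedSpace.exp_zero]
  -- key isometry fact
  have hiso : ∀ y : m × n → ℂ,
      star (U.mulVec y) ⬝ᵥ U.mulVec y = star y ⬝ᵥ y := by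
    intro y
    rw [Matrix.star_mulVec, dotProduct_mulVec, Matrix.vecMul_vecMul, hUnit,
      Matrix.vecMul_one]
  -- the vectors
  set yu : m × n → ℂ := fun q => (p q.1 : ℂ) * (if q.2 = u then 1 else 0) with hyu
  set yv : m × n → ℂ := fun q => (p q.1 : ℂ) * (if q.2 = v then 1 else 0) with hyv
  have hGx : ∀ (a : m) (b : n), G.mulVec (Pi.single (a, b) 1)
      = (p a : ℂ) • fun q : m × n => (p q.1 : ℂ) * (if q.2 = b then 1 else 0) := by
    intro a b
    funext q
    rcases q with ⟨i, j⟩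
    simp only [hG, Matrix.mulVec, dotProduct, Pi.single_apply, Pi.smul_apply,
      smul_eq_mul]
    rw [Finset.sum_eq_single (a, b)]
    · simp only [Matrix.map_apply, Matrix.kronecker_apply, if_pos rfl, mul_one,
        Matrix.one_apply, hF, Matrix.vecMulVec_apply]
      push_cast
      by_cases hjb : j = b <;> simp [hjb] <;> ring
    · intro c _ hc
      simp [if_neg hc]
    · intro h
      exact absurd (Finset.mem_univ _) h
  -- combine
  have hnorm : ∀ b : n, star (fun q : m × n => (p q.1 : ℂ) * (if q.2 = b then 1 else 0))
      ⬝ᵥ (fun q : m × n => (p q.1 : ℂ) * (if q.2 = b then 1 else 0)) = 1 := by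
    intro b
    have hsum : ∑ i : m, (p i : ℝ) * p i = 1 := by
      have := congrFun (congrFun hPtP r) r
      simpa [Matrix.mul_apply, Matrix.one_apply, hp, mul_comm] using this
    calc (star (fun q : m × n => (p q.1 : ℂ) * (if q.2 = b then 1 else 0))
        ⬝ᵥ (fun q : m × n => (p q.1 : ℂ) * (if q.2 = b then 1 else 0)))
        = ∑ q : m × n, ((p q.1 : ℂ) * (p q.1 : ℂ)) * (if q.2 = b then 1 else 0) := by
          simp only [dotProduct, Pi.star_apply, star_mul', Complex.conj_ofReal]
          congr 1; funext q
          by_cases hq : q.2 = b <;> simp [hq]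
      _ = ∑ i : m, (p i : ℂ) * (p i : ℂ) := by
          rw [Fintype.sum_prod_type]
          congr 1; funext i
          simp
      _ = 1 := by exact_mod_cast hsum
  have expand : ∀ (a : ℂ) (b : n),
      star (a • fun q : m × n => (p q.1 : ℂ) * (if q.2 = b then 1 else 0))
        ⬝ᵥ (a • fun q : m × n => (p q.1 : ℂ) * (if q.2 = b then 1 else 0))
        = star a * a := by
    intro a b
    rw [star_smul, smul_dotProduct, dotProduct_smul, hnorm b]
    simp [smul_eq_mul, mul_comm]
  have key : G.mulVec (U.mulVec (Pi.single (w, u) 1))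
      = U.mulVec (G.mulVec (Pi.single (w, u) 1)) := by
    rw [Matrix.mulVec_mulVec, Matrix.mulVec_mulVec, hUG]
  rw [hpst, Matrix.mulVec_smul, hGx w u, hGx z v, smul_smul] at key
  have key2 := hiso ((p w : ℂ) • fun q : m × n => (p q.1 : ℂ) * (if q.2 = u then 1 else 0))
  rw [← key, expand, expand] at key2
  -- key2 : star (lam * ↑(p z)) * (lam * ↑(p z)) = star ↑(p w) * ↑(p w)
  have hl : star lam * lam = 1 := by
    rw [Complex.star_def, mul_comm, Complex.mul_conj, ← Complex.sq_norm, hlam]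
    norm_num
  have hq2 : (p z : ℂ) * (p z : ℂ) = (p w : ℂ) * (p w : ℂ) := by
    have h0 : star (lam * (p z : ℂ)) * (lam * (p z : ℂ))
        = (star lam * lam) * ((p z : ℂ) * (p z : ℂ)) := by
      simp only [star_mul', Complex.star_def, Complex.conj_ofReal]
      ring
    have h0' : star ((p w : ℂ)) * (p w : ℂ) = (p w : ℂ) * (p w : ℂ) := by
      simp only [Complex.star_def, Complex.conj_ofReal]
    rw [h0, hl, one_mul, h0'] at key2
    exact key2
  have : ((p w : ℝ) ^ 2 : ℂ) = ((p z : ℝ) ^ 2 : ℂ) := by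
    push_cast
    rw [sq, sq, hq2]
  exact_mod_cast this
end

section
/- Suppose A(X) = B ⊗ C + M ⊗ N with B, M commuting symmetric matrices, and X admits perfect state transfer from (w,u) to (z,v) at time τ with phase λ. Then for every index r such that the projection of e_w onto the r-th common eigenvector is nonzero, exp(iτ(β_r C + μ_r N)) e_u = ±λ e_v. In particular if u ≠ v each such matrix L_r = β_r C + μ_r N admits perfect state transfer from u to v at time τ. -/
open Matrix Kronecker NormedSpace

private lemma exp_reindex' {m n : Type*} [Fintype m] [DecidableEq m] [Fintype n] [DecidableEq n]
    (e : m ≃ n) (A : Matrix m m ℂ) :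
    exp (Matrix.reindex e e A) = Matrix.reindex e e (exp A) := by
  letI : SeminormedRing (Matrix m m ℂ) := Matrix.linftyOpSemiNormedRing
  letI : NormedRing (Matrix m m ℂ) := Matrix.linftyOpNormedRing
  letI : NormedAlgebra ℂ (Matrix m m ℂ) := Matrix.linftyOpNormedAlgebra
  letI : NormedAlgebra ℚ (Matrix m m ℂ) := NormedAlgebra.restrictScalars ℚ ℂ (Matrix m m ℂ)
  letI : SeminormedRing (Matrix n n ℂ) := Matrix.linftyOpSemiNormedRing
  letI : NormedRing (Matrix n n ℂ) := Matrix.linftyOpNormedRing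
  letI : NormedAlgebra ℂ (Matrix n n ℂ) := Matrix.linftyOpNormedAlgebra
  letI : NormedAlgebra ℚ (Matrix n n ℂ) := NormedAlgebra.restrictScalars ℚ ℂ (Matrix n n ℂ)
  have hc : Continuous (Matrix.reindexAlgEquiv ℂ ℂ e : Matrix m m ℂ →ₐ[ℂ] Matrix n n ℂ) :=
    (Matrix.reindexAlgEquiv ℂ ℂ e).toLinearMap.continuous_of_finiteDimensional
  exact (map_exp ((Matrix.reindexAlgEquiv ℂ ℂ e : Matrix m m ℂ ≃ₐ[ℂ] Matrix n n ℂ) :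
    Matrix m m ℂ →ₐ[ℂ] Matrix n n ℂ) hc A).symm

/-- Suppose `A(X) = B ⊗ C + M ⊗ N` with `B, M` commuting symmetric matrices
simultaneously diagonalized by the orthogonal `P` with eigenvalues `β r, μ r`,
and `X` admits perfect state transfer from `(w,u)` to `(z,v)` at time `τ` with
phase `λ`. Then for every index `r` such that the projection of `e_w` onto the
`r`-th common eigenvector is nonzero, `exp(iτ(β_r C + μ_r N)) e_u = ±λ e_v`. -/
theorem stmt_10 {m n : Type*} [Fintype m] [DecidableEq m] [Fintype n] [DecidableEq n]
    (B M : Matrix m m ℝ) (hB : B.IsSymm) (hM : M.IsSymm) (hBM : B * M = M * B)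
    (C N : Matrix n n ℝ) (hC : C.IsSymm) (hN : N.IsSymm)
    (P : Matrix m m ℝ) (hP : P ∈ Matrix.orthogonalGroup m ℝ)
    (β μ : m → ℝ)
    (hPB : Pᵀ * B * P = Matrix.diagonal β)
    (hPM : Pᵀ * M * P = Matrix.diagonal μ)
    (w z : m) (u v : n) (τ : ℝ) (lam : ℂ) (hlam : ‖lam‖ = 1)
    (hpst : (NormedSpace.exp
        ((Complex.I * (τ : ℂ)) • (B ⊗ₖ C + M ⊗ₖ N).map Complex.ofReal)).mulVec
        (Pi.single (w, u) 1 : m × n → ℂ) = lam • (Pi.single (z, v) 1 : m × n → ℂ)) :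
    ∀ r : m, Pᵀ.mulVec (Pi.single w 1) r ≠ 0 →
      (NormedSpace.exp ((Complex.I * (τ : ℂ)) •
          (β r • C + μ r • N).map Complex.ofReal)).mulVec (Pi.single u 1 : n → ℂ)
        = lam • (Pi.single v 1 : n → ℂ) ∨
      (NormedSpace.exp ((Complex.I * (τ : ℂ)) •
          (β r • C + μ r • N).map Complex.ofReal)).mulVec (Pi.single u 1 : n → ℂ)
        = (-lam) • (Pi.single v 1 : n → ℂ) := by
  classical
  intro r hr
  have hPwr : P w r ≠ 0 := by
    simpa [Matrix.mulVec_single, Matrix.transpose_apply] using hr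
  have hPwrC : (P w r : ℂ) ≠ 0 := by exact_mod_cast hPwr
  set ι : ℂ := Complex.I * (τ : ℂ) with hι
  set f : ℝ →+* ℂ := Complex.ofRealHom with hf
  -- orthogonality
  have h1 : P * Pᵀ = 1 := by
    have := hP.2
    rwa [Matrix.star_eq_conjTranspose, Matrix.conjTranspose_eq_transpose_of_trivial] at this
  have h2 : Pᵀ * P = 1 := by
    have := hP.1
    rwa [Matrix.star_eq_conjTranspose, Matrix.conjTranspose_eq_transpose_of_trivial] at this
  have h1c : (P.map f) * (Pᵀ.map f) = 1 := by
    rw [← Matrix.map_mul, h1]; simp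
  have h2c : (Pᵀ.map f) * (P.map f) = 1 := by
    rw [← Matrix.map_mul, h2]; simp
  -- complex diagonalization
  have hBc : P.map f * (Matrix.diagonal β).map f * Pᵀ.map f = B.map f := by
    rw [← hPB]
    simp only [Matrix.map_mul]
    calc P.map f * (Pᵀ.map f * B.map f * P.map f) * Pᵀ.map f
        = (P.map f * Pᵀ.map f) * B.map f * (P.map f * Pᵀ.map f) := by noncomm_ring
      _ = B.map f := by rw [h1c]; simp
  have hMc : P.map f * (Matrix.diagonal μ).map f * Pᵀ.map f = M.map f := by
    rw [← hPM]
    simp only [Matrix.map_mul]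
    calc P.map f * (Pᵀ.map f * M.map f * P.map f) * Pᵀ.map f
        = (P.map f * Pᵀ.map f) * M.map f * (P.map f * Pᵀ.map f) := by noncomm_ring
      _ = M.map f := by rw [h1c]; simp
  -- the big unitary
  set Q : Matrix (m × n) (m × n) ℂ := (P.map f) ⊗ₖ (1 : Matrix n n ℂ) with hQ
  set Q' : Matrix (m × n) (m × n) ℂ := (Pᵀ.map f) ⊗ₖ (1 : Matrix n n ℂ) with hQ'
  have hQQ' : Q * Q' = 1 := by
    rw [hQ, hQ', ← Matrix.mul_kronecker_mul, h1c, Matrix.one_mul, Matrix.one_kronecker_one]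
  have hQ'Q : Q' * Q = 1 := by
    rw [hQ, hQ', ← Matrix.mul_kronecker_mul, h2c, Matrix.one_mul, Matrix.one_kronecker_one]
  set U : (Matrix (m × n) (m × n) ℂ)ˣ := ⟨Q, Q', hQQ', hQ'Q⟩ with hU
  -- the block-diagonal middle matrix
  set g : m → Matrix n n ℂ := fun s => ι • ((β s • C + μ s • N).map f) with hg
  set X : Matrix (m × n) (m × n) ℂ :=
    ι • ((Matrix.diagonal β).map f ⊗ₖ C.map f + (Matrix.diagonal μ).map f ⊗ₖ N.map f) with hX
  have hconj : ι • ((B ⊗ₖ C + M ⊗ₖ N).map Complex.ofReal) = Q * X * Q' := by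
    have hBC : (B ⊗ₖ C).map Complex.ofReal = (B.map f) ⊗ₖ (C.map f) := by
      ext ⟨i, k⟩ ⟨j, l⟩
      simp [Matrix.kroneckerMap_apply, hf]
    have hMN : (M ⊗ₖ N).map Complex.ofReal = (M.map f) ⊗ₖ (N.map f) := by
      ext ⟨i, k⟩ ⟨j, l⟩
      simp [Matrix.kroneckerMap_apply, hf]
    rw [hX, Matrix.mul_smul, Matrix.smul_mul]
    congr 1
    rw [hQ, hQ', Matrix.map_add _ Complex.ofReal_add, hBC, hMN, Matrix.mul_add, Matrix.add_mul,
      ← Matrix.mul_kronecker_mul, ← Matrix.mul_kronecker_mul,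
      ← Matrix.mul_kronecker_mul, ← Matrix.mul_kronecker_mul]
    rw [Matrix.mul_one, Matrix.one_mul, Matrix.mul_one, Matrix.one_mul, hBc, hMc]
  -- X is a reindexed block diagonal
  set e : n × m ≃ m × n := Equiv.prodComm n m with he
  have hXblock : X = Matrix.reindex e e (Matrix.blockDiagonal g) := by
    ext ⟨s, i⟩ ⟨t, j⟩
    simp only [hX, hg, he, Matrix.reindex_apply, Matrix.submatrix_apply, Equiv.prodComm_symm,
      Equiv.prodComm_apply, Prod.swap_prod_mk, Matrix.blockDiagonal_apply,
      Matrix.smul_apply, Matrix.add_apply, Matrix.kroneckerMap_apply, Matrix.map_apply,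
      Matrix.diagonal_apply, smul_eq_mul]
    by_cases hst : s = t
    · subst hst
      simp only [if_pos rfl, hf, Complex.ofRealHom_eq_coe]
      push_cast
      ring
    · simp [hst]
  have hexpX : exp X = Matrix.reindex e e (Matrix.blockDiagonal fun s => exp (g s)) := by
    letI : SeminormedRing (Matrix n n ℂ) := Matrix.linftyOpSemiNormedRing
    letI : NormedRing (Matrix n n ℂ) := Matrix.linftyOpNormedRing
    letI : NormedAlgebra ℂ (Matrix n n ℂ) := Matrix.linftyOpNormedAlgebra
    letI : NormedAlgebra ℚ (Matrix n n ℂ) := NormedAlgebra.restrictScalars ℚ ℂ (Matrix n n ℂ)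
    rw [hXblock, exp_reindex', Matrix.exp_blockDiagonal]
    exact congrArg _ (congrArg Matrix.blockDiagonal (Pi.exp_def g))
  have hexpA : exp (ι • (B ⊗ₖ C + M ⊗ₖ N).map Complex.ofReal) = Q * exp X * Q' := by
    rw [hconj]
    exact Matrix.exp_units_conj U X
  -- componentwise consequence of PST
  have key : ∀ i : n, (P w r : ℂ) * (exp (g r)) i u
      = lam * (P z r : ℂ) * (if i = v then 1 else 0) := by
    intro i
    have h2 : (Q' * exp (ι • (B ⊗ₖ C + M ⊗ₖ N).map Complex.ofReal)).mulVec
        (Pi.single (w, u) 1) = lam • Q'.mulVec (Pi.single (z, v) 1) := by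
      rw [← Matrix.mulVec_mulVec, hpst, Matrix.mulVec_smul]
    rw [hexpA] at h2
    have h3 : Q' * (Q * exp X * Q') = exp X * Q' := by
      calc Q' * (Q * exp X * Q') = (Q' * Q) * (exp X * Q') := by noncomm_ring
        _ = exp X * Q' := by rw [hQ'Q, Matrix.one_mul]
    rw [h3, ← Matrix.mulVec_mulVec] at h2
    have h4 := congrFun h2 (r, i)
    rw [hexpX] at h4
    simp only [Matrix.mulVec_single_one, Matrix.col_apply, mul_one, Pi.smul_apply, smul_eq_mul] at h4
    -- unfold the sums
    rw [Matrix.mulVec] at h4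
    simp only [dotProduct, Fintype.sum_prod_type, Matrix.reindex_apply,
      Matrix.submatrix_apply, he, Equiv.prodComm_symm, Equiv.prodComm_apply, Prod.swap_prod_mk,
      Matrix.blockDiagonal_apply, hQ', Matrix.col_apply, Matrix.kroneckerMap_apply, Matrix.map_apply,
      Matrix.transpose_apply, Matrix.one_apply, ite_mul, mul_ite, zero_mul, mul_zero,
      Finset.sum_ite_eq, Finset.sum_ite_eq', Finset.mem_univ, if_true, mul_one] at h4
    simp only [hf, Complex.ofRealHom_eq_coe] at h4
    rw [mul_comm, h4]
    split <;> ring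
  -- single-block transfer with phase c
  set E : Matrix n n ℂ := exp (g r) with hE
  set c : ℂ := lam * (P z r : ℂ) / (P w r : ℂ) with hc
  have hEu : E *ᵥ (Pi.single u 1) = c • (Pi.single v 1 : n → ℂ) := by
    funext i
    have h := key i
    simp only [Matrix.mulVec_single_one, Matrix.col_apply, mul_one, Pi.smul_apply, smul_eq_mul, Pi.single_apply]
    rw [hc, div_mul_eq_mul_div, eq_div_iff hPwrC]
    linear_combination h
  -- Hermitian structure
  have hCsymm : ∀ i j, C j i = C i j := fun i j => congrFun (congrFun hC i) j
  have hNsymm : ∀ i j, N j i = N i j := fun i j => congrFun (congrFun hN i) j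
  have hgherm : (g r)ᴴ = -(g r) := by
    ext i j
    simp only [hg, Matrix.conjTranspose_apply, Matrix.neg_apply, Matrix.smul_apply,
      Matrix.map_apply, Matrix.add_apply, Pi.smul_apply, smul_eq_mul,
      hf, Complex.ofRealHom_eq_coe, hι, hCsymm i j, hNsymm i j]
    simp only [star_mul', Complex.star_def, Complex.conj_ofReal, Complex.conj_I]
    ring
  have hEE : Eᴴ * E = 1 := by
    rw [hE, ← Matrix.exp_conjTranspose, hgherm,
      ← Matrix.exp_add_of_commute _ _ ((Commute.refl (g r)).neg_left), neg_add_cancel,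
      exp_zero]
  have hEvu : E v u = c := by
    have := congrFun hEu v
    simpa using this
  have hcc : c * star c = 1 := by
    have h5 : (Pi.single u 1 : n → ℂ) = c • (Eᴴ *ᵥ (Pi.single v 1 : n → ℂ)) := by
      calc (Pi.single u 1 : n → ℂ) = (Eᴴ * E) *ᵥ (Pi.single u 1 : n → ℂ) := by
            rw [hEE, Matrix.one_mulVec]
        _ = Eᴴ *ᵥ (E *ᵥ (Pi.single u 1 : n → ℂ)) := by rw [← Matrix.mulVec_mulVec]
        _ = Eᴴ *ᵥ (c • (Pi.single v 1 : n → ℂ)) := by rw [hEu]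
        _ = c • (Eᴴ *ᵥ (Pi.single v 1 : n → ℂ)) := Matrix.mulVec_smul _ _ _
    have h6 := congrFun h5 u
    simp only [Pi.single_eq_same, Pi.smul_apply, smul_eq_mul, Matrix.mulVec_single_one, Matrix.col_apply, mul_one,
      Matrix.conjTranspose_apply, hEvu] at h6
    rw [h6]
  -- extract the sign
  set d : ℝ := P z r / P w r with hd
  have hcd : c = lam * (d : ℂ) := by rw [hc, hd]; push_cast; ring
  have hstarc : star c = star lam * (d : ℂ) := by
    rw [hcd, star_mul']
    simp [Complex.star_def, Complex.conj_ofReal]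
  have hnorm : lam * star lam = 1 := by
    rw [Complex.star_def, Complex.mul_conj]
    rw [← Complex.sq_norm, hlam]
    norm_num
  have hd2C : (d : ℂ)^2 = 1 := by
    have h7 := hcc
    rw [hstarc, hcd] at h7
    calc (d:ℂ)^2 = (lam * star lam) * (d:ℂ)^2 := by rw [hnorm]; ring
      _ = 1 := by rw [← h7]; ring
  have hd2 : d * d = 1 := by
    have : ((d * d : ℝ) : ℂ) = ((1 : ℝ) : ℂ) := by push_cast; linear_combination hd2C
    exact_mod_cast this
  have hgoal : E = exp ((Complex.I * (τ:ℂ)) •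
      (β r • C + μ r • N).map Complex.ofReal) := by
    rw [hE]
    simp only [hg, hι]
    congr 1
  rcases mul_self_eq_one_iff.mp hd2 with h | h
  · left
    have hcl : c = lam := by rw [hcd, h]; simp
    rw [← hgoal, hEu, hcl]
  · right
    have hcl : c = -lam := by rw [hcd, h]; push_cast; ring
    rw [← hgoal, hEu, hcl]
end

section
/- The graph X ⋉ Y admits perfect state transfer from (0,u) to (0,v) at time τ (with u ≠ v) if and only if there exists λ with |λ|=1 such that exp(iτ(A+B)) e_u = λ e_v and exp(iτ(A−B)) e_u = λ e_v, i.e., A+B and A−B both admit uv-perfect state transfer at time τ with the same phase. -/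
open Matrix

section Aux

variable {n : Type*} [Fintype n] [DecidableEq n]

private lemma blk11 (x y x' y' : Matrix n n ℂ) :
    (2:ℂ)⁻¹ • (x + y) * ((2:ℂ)⁻¹ • (x' + y')) +
      (2:ℂ)⁻¹ • (x - y) * ((2:ℂ)⁻¹ • (x' - y')) = (2:ℂ)⁻¹ • (x * x' + y * y') := by
  simp only [smul_mul_assoc, mul_smul_comm, smul_smul, ← smul_add]
  have h : (x + y) * (x' + y') + (x - y) * (x' - y') = (2:ℂ) • (x * x' + y * y') := by
    rw [two_smul]; noncomm_ring
  rw [h, smul_smul]; norm_num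

private lemma blk12 (x y x' y' : Matrix n n ℂ) :
    (2:ℂ)⁻¹ • (x + y) * ((2:ℂ)⁻¹ • (x' - y')) +
      (2:ℂ)⁻¹ • (x - y) * ((2:ℂ)⁻¹ • (x' + y')) = (2:ℂ)⁻¹ • (x * x' - y * y') := by
  simp only [smul_mul_assoc, mul_smul_comm, smul_smul, ← smul_add]
  have h : (x + y) * (x' - y') + (x - y) * (x' + y') = (2:ℂ) • (x * x' - y * y') := by
    rw [two_smul]; noncomm_ring
  rw [h, smul_smul]; norm_num

/-- The algebra homomorphism sending `(x, y)` to the block matrix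
`fromBlocks ((x+y)/2) ((x-y)/2) ((x-y)/2) ((x+y)/2)`. -/
noncomputable def phiAux :
    (Matrix n n ℂ × Matrix n n ℂ) →ₐ[ℂ] Matrix (n ⊕ n) (n ⊕ n) ℂ where
  toFun p := Matrix.fromBlocks ((2:ℂ)⁻¹ • (p.1 + p.2)) ((2:ℂ)⁻¹ • (p.1 - p.2))
      ((2:ℂ)⁻¹ • (p.1 - p.2)) ((2:ℂ)⁻¹ • (p.1 + p.2))
  map_one' := by
    rw [← Matrix.fromBlocks_one]
    refine Matrix.fromBlocks_inj.2 ⟨?_, ?_, ?_, ?_⟩ <;>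
      simp only [Prod.fst_one, Prod.snd_one]
    · rw [← two_smul ℂ (1 : Matrix n n ℂ), smul_smul]; norm_num
    · rw [sub_self, smul_zero]
    · rw [sub_self, smul_zero]
    · rw [← two_smul ℂ (1 : Matrix n n ℂ), smul_smul]; norm_num
  map_mul' p q := by
    rw [Matrix.fromBlocks_multiply]
    refine Matrix.fromBlocks_inj.2 ?_
    simp only [Prod.fst_mul, Prod.snd_mul]
    exact ⟨(blk11 _ _ _ _).symm, (blk12 _ _ _ _).symm,
      ((add_comm _ _).trans (blk12 _ _ _ _)).symm,
      ((add_comm _ _).trans (blk11 _ _ _ _)).symm⟩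
  map_zero' := by simp
  map_add' p q := by
    rw [Matrix.fromBlocks_add]
    refine Matrix.fromBlocks_inj.2 ⟨?_, ?_, ?_, ?_⟩ <;>
      · rw [← smul_add]
        congr 1
        simp only [Prod.fst_add, Prod.snd_add]
        abel
  commutes' r := by
    simp only [Algebra.algebraMap_eq_smul_one, Prod.smul_fst, Prod.smul_snd,
      Prod.fst_one, Prod.snd_one]
    rw [sub_self, smul_zero, ← two_smul ℂ (r • (1 : Matrix n n ℂ)), smul_smul]
    norm_num
    rw [← Matrix.fromBlocks_one, Matrix.fromBlocks_smul, smul_zero]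

lemma phiAux_continuous :
    Continuous (phiAux (n := n)) := by
  apply Continuous.matrix_fromBlocks <;>
    first
      | exact (continuous_fst.add continuous_snd :
          Continuous fun x : Matrix n n ℂ × Matrix n n ℂ => x.1 + x.2).const_smul (2⁻¹ : ℂ)
      | exact (continuous_fst.sub continuous_snd :
          Continuous fun x : Matrix n n ℂ × Matrix n n ℂ => x.1 - x.2).const_smul (2⁻¹ : ℂ)

lemma exp_phiAux (p : Matrix n n ℂ × Matrix n n ℂ) :
    NormedSpace.exp (phiAux p) = phiAux (NormedSpace.exp p.1, NormedSpace.exp p.2) := by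
  letI : NormedRing (Matrix n n ℂ) := Matrix.linftyOpNormedRing
  letI : NormedAlgebra ℂ (Matrix n n ℂ) := Matrix.linftyOpNormedAlgebra
  letI : NormedRing (Matrix (n ⊕ n) (n ⊕ n) ℂ) := Matrix.linftyOpNormedRing
  letI : NormedAlgebra ℂ (Matrix (n ⊕ n) (n ⊕ n) ℂ) := Matrix.linftyOpNormedAlgebra
  letI : NormedAlgebra ℚ (Matrix n n ℂ) := NormedAlgebra.restrictScalars ℚ ℂ _
  letI : NormedAlgebra ℚ (Matrix (n ⊕ n) (n ⊕ n) ℂ) := NormedAlgebra.restrictScalars ℚ ℂ _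
  refine Eq.trans (NormedSpace.map_exp (phiAux (n := n)) phiAux_continuous p).symm ?_
  congr 1
  exact Prod.ext (Prod.fst_exp p) (Prod.snd_exp p)

end Aux

/-- For `u ≠ v`, `X ⋉ Y` admits perfect state transfer from `(0,u)` to `(0,v)`
at time `τ` iff there is a unimodular `λ` with `exp(iτ(A+B)) e_u = λ e_v` and
`exp(iτ(A−B)) e_u = λ e_v` (both summands admit `uv`-PST with the same phase). -/
theorem stmt_14 {n : Type*} [Fintype n] [DecidableEq n]
    (A B : Matrix n n ℝ) (hA : A.IsSymm) (hB : B.IsSymm)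
    (u v : n) (huv : u ≠ v) (τ : ℝ) :
    (∃ γ : ℂ, ‖γ‖ = 1 ∧
      (NormedSpace.exp ((Complex.I * (τ : ℂ)) •
          (Matrix.fromBlocks A B B A).map Complex.ofReal)).mulVec
        (Pi.single (Sum.inl u) 1 : n ⊕ n → ℂ)
        = γ • (Pi.single (Sum.inl v) 1 : n ⊕ n → ℂ)) ↔
    (∃ lam : ℂ, ‖lam‖ = 1 ∧
      (NormedSpace.exp ((Complex.I * (τ : ℂ)) • (A + B).map Complex.ofReal)).mulVec
        (Pi.single u 1 : n → ℂ) = lam • (Pi.single v 1 : n → ℂ) ∧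
      (NormedSpace.exp ((Complex.I * (τ : ℂ)) • (A - B).map Complex.ofReal)).mulVec
        (Pi.single u 1 : n → ℂ) = lam • (Pi.single v 1 : n → ℂ)) := by
  set c : ℂ := Complex.I * (τ : ℂ)
  set P : Matrix n n ℂ := c • (A + B).map Complex.ofReal with hP
  set Q : Matrix n n ℂ := c • (A - B).map Complex.ofReal with hQ
  -- the scaled block matrix is `phiAux (P, Q)`
  have hblock : c • (Matrix.fromBlocks A B B A).map Complex.ofReal = phiAux (P, Q) := by
    unfold phiAux
    simp only [AlgHom.coe_mk, RingHom.coe_mk, MonoidHom.coe_mk, OneHom.coe_mk]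
    rw [Matrix.fromBlocks_map, Matrix.fromBlocks_smul]
    refine Matrix.fromBlocks_inj.2 ?_
    have h1 : (2:ℂ)⁻¹ • (P + Q) = c • A.map Complex.ofReal := by
      rw [hP, hQ, ← smul_add, smul_comm]
      congr 1
      have : (A + B).map Complex.ofReal + (A - B).map Complex.ofReal
          = (2:ℂ) • A.map Complex.ofReal := by
        ext i j; simp [Matrix.map_apply]; push_cast; ring
      rw [this, smul_smul]; norm_num
    have h2 : (2:ℂ)⁻¹ • (P - Q) = c • B.map Complex.ofReal := by
      rw [hP, hQ, ← smul_sub, smul_comm]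
      congr 1
      have : (A + B).map Complex.ofReal - (A - B).map Complex.ofReal
          = (2:ℂ) • B.map Complex.ofReal := by
        ext i j; simp [Matrix.map_apply]; push_cast; ring
      rw [this, smul_smul]; norm_num
    exact ⟨h1.symm, h2.symm, h2.symm, h1.symm⟩
  rw [hblock, exp_phiAux]
  set EP : Matrix n n ℂ := NormedSpace.exp P
  set EQ : Matrix n n ℂ := NormedSpace.exp Q
  -- unfold phiAux applied to the exponentials
  show (∃ γ : ℂ, ‖γ‖ = 1 ∧
      (Matrix.fromBlocks ((2:ℂ)⁻¹ • (EP + EQ)) ((2:ℂ)⁻¹ • (EP - EQ))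
        ((2:ℂ)⁻¹ • (EP - EQ)) ((2:ℂ)⁻¹ • (EP + EQ))).mulVec
        (Pi.single (Sum.inl u) 1 : n ⊕ n → ℂ)
        = γ • (Pi.single (Sum.inl v) 1 : n ⊕ n → ℂ)) ↔ _
  have hsingle : (Pi.single (Sum.inl u) 1 : n ⊕ n → ℂ)
      = Sum.elim (Pi.single u 1 : n → ℂ) 0 := by
    ext i; rcases i with i | i <;> simp [Pi.single_apply, Sum.inl.injEq]
  constructor
  · rintro ⟨γ, hγ, h⟩
    refine ⟨γ, hγ, ?_⟩
    rw [hsingle, Matrix.fromBlocks_mulVec] at h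
    simp only [Sum.elim_comp_inl, Sum.elim_comp_inr, Matrix.mulVec_zero, add_zero] at h
    have hl := congrArg (fun f => f ∘ Sum.inl) h
    have hr := congrArg (fun f => f ∘ Sum.inr) h
    simp only [Sum.elim_comp_inl, Sum.elim_comp_inr] at hl hr
    have hl' : ((2:ℂ)⁻¹ • (EP + EQ)).mulVec (Pi.single u 1 : n → ℂ) = γ • (Pi.single v 1 : n → ℂ) := by
      rw [hl]; ext i
      simp [Pi.single_apply, Sum.inl.injEq]
    have hr' : ((2:ℂ)⁻¹ • (EP - EQ)).mulVec (Pi.single u 1 : n → ℂ) = 0 := by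
      rw [hr]; ext i
      simp [Pi.single_apply]
    have heq : EP.mulVec (Pi.single u 1 : n → ℂ) = EQ.mulVec (Pi.single u 1 : n → ℂ) := by
      rw [Matrix.smul_mulVec] at hr'
      rcases smul_eq_zero.mp hr' with h0 | h0
      · norm_num at h0
      · rw [Matrix.sub_mulVec] at h0
        exact sub_eq_zero.mp h0
    have hEP : EP.mulVec (Pi.single u 1 : n → ℂ) = γ • (Pi.single v 1 : n → ℂ) := by
      rw [Matrix.smul_mulVec, Matrix.add_mulVec, ← heq,
        ← two_smul ℂ (EP *ᵥ (Pi.single u 1 : n → ℂ)), smul_smul,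
        show ((2:ℂ)⁻¹ * 2) = 1 by norm_num, one_smul] at hl'
      exact hl'
    exact ⟨hEP, heq ▸ hEP⟩
  · rintro ⟨lam, hlam, h1, h2⟩
    refine ⟨lam, hlam, ?_⟩
    rw [hsingle, Matrix.fromBlocks_mulVec]
    simp only [Sum.elim_comp_inl, Sum.elim_comp_inr, Matrix.mulVec_zero, add_zero]
    have e1 : ((2:ℂ)⁻¹ • (EP + EQ)).mulVec (Pi.single u 1 : n → ℂ)
        = lam • (Pi.single v 1 : n → ℂ) := by
      rw [Matrix.smul_mulVec, Matrix.add_mulVec, h1, h2, ← two_smul ℂ, smul_smul]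
      norm_num
    have e2 : ((2:ℂ)⁻¹ • (EP - EQ)).mulVec (Pi.single u 1 : n → ℂ) = 0 := by
      rw [Matrix.smul_mulVec, Matrix.sub_mulVec, h1, h2, sub_self, smul_zero]
    rw [e1, e2]
    ext i; rcases i with i | i <;> simp [Pi.single_apply, Sum.inl.injEq]
end

section
/- If A(X) and A(Y) commute, and there is a time τ > 0 at which X is periodic at u with some unimodular phase μ and Y is periodic at u with phase i or −i (i.e., exp(iτA(Y)) e_u = ±i e_u), then X ⋉ Y admits perfect state transfer between (0,u) and (1,u) at time τ. -/
open Matrix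

noncomputable def reindexCLE {m p : Type*} (σ : p ≃ m) :
    Matrix m m ℂ ≃L[ℂ] Matrix p p ℂ :=
  { Matrix.reindexLinearEquiv ℂ ℂ σ.symm σ.symm with
    continuous_toFun := continuous_id.matrix_submatrix σ σ
    continuous_invFun := continuous_id.matrix_submatrix σ.symm σ.symm }

lemma exp_submatrix_equiv {m p : Type*} [Fintype m] [DecidableEq m] [Fintype p] [DecidableEq p]
    (σ : p ≃ m) (M : Matrix m m ℂ) :
    NormedSpace.exp (M.submatrix σ σ) = (NormedSpace.exp M).submatrix σ σ := by
  have hpow : ∀ k : ℕ, (M.submatrix σ σ) ^ k = (M ^ k).submatrix σ σ := by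
    intro k
    induction k with
    | zero => simp [Matrix.submatrix_one_equiv]
    | succ k ih => rw [pow_succ, pow_succ, ih, Matrix.submatrix_mul_equiv]
  have key : ∀ (c : ℂ) (N : Matrix m m ℂ),
      c • (N.submatrix σ σ) = (reindexCLE σ) (c • N) := fun _ _ => rfl
  have key2 : ∀ N : Matrix m m ℂ, N.submatrix σ σ = (reindexCLE σ) N := fun _ => rfl
  simp_rw [NormedSpace.exp_eq_tsum ℂ, hpow, key]
  rw [key2, ContinuousLinearEquiv.tsum_eq_iff]
  simp

noncomputable def sumProdBool (n : Type*) : n ⊕ n ≃ n × Bool :=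
  (Equiv.boolProdEquivSum n).symm.trans (Equiv.prodComm Bool n)

lemma fromBlocks_eq_submatrix {n : Type*} [Fintype n] [DecidableEq n] (X Y : Matrix n n ℂ) :
    Matrix.fromBlocks X 0 0 Y =
      (Matrix.blockDiagonal (fun b => bif b then Y else X)).submatrix
        (sumProdBool n) (sumProdBool n) := by
  ext i j
  rcases i with i | i <;> rcases j with j | j <;>
    simp [sumProdBool, Matrix.blockDiagonal_apply, Equiv.boolProdEquivSum]

lemma exp_fromBlocks_diag {n : Type*} [Fintype n] [DecidableEq n] (X Y : Matrix n n ℂ) :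
    NormedSpace.exp (Matrix.fromBlocks X 0 0 Y) =
      Matrix.fromBlocks (NormedSpace.exp X) 0 0 (NormedSpace.exp Y) := by
  letI : SeminormedRing (Matrix n n ℂ) := Matrix.linftyOpSemiNormedRing
  letI : NormedRing (Matrix n n ℂ) := Matrix.linftyOpNormedRing
  letI : NormedAlgebra ℂ (Matrix n n ℂ) := Matrix.linftyOpNormedAlgebra
  letI : NormedAlgebra ℚ (Matrix n n ℂ) := Matrix.linftyOpNormedAlgebra
  have hfun : (fun b => NormedSpace.exp (bif b then Y else X)) =
      fun b => bif b then NormedSpace.exp Y else NormedSpace.exp X := by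
    funext b; cases b <;> rfl
  rw [fromBlocks_eq_submatrix X Y, exp_submatrix_equiv, Matrix.exp_blockDiagonal,
    show NormedSpace.exp (fun b => bif b then Y else X) = fun b => NormedSpace.exp (bif b then Y else X) from funext fun b => Pi.coe_exp _ b, hfun, ← fromBlocks_eq_submatrix]

section lemmas

lemma single_inl_eq {n : Type*} [DecidableEq n] (u : n) :
    (Pi.single (Sum.inl u) 1 : n ⊕ n → ℂ) = Sum.elim (Pi.single u 1) (0 : n → ℂ) := by
  funext x
  cases x with
  | inl i => simp [Pi.single_apply]
  | inr i => simp [Pi.single_apply]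

lemma single_inr_eq {n : Type*} [DecidableEq n] (u : n) :
    (Pi.single (Sum.inr u) 1 : n ⊕ n → ℂ) = Sum.elim (0 : n → ℂ) (Pi.single u 1) := by
  funext x
  cases x with
  | inl i => simp [Pi.single_apply]
  | inr i => simp [Pi.single_apply]

end lemmas

/-- If `A(X)` and `A(Y)` commute, `X` is periodic at `u` at time `τ > 0` with
unimodular phase `μ`, and `Y` is periodic at `u` at time `τ` with phase `±i`,
then `X ⋉ Y` admits perfect state transfer between `(0,u)` and `(1,u)` at
time `τ`. -/
theorem stmt_16 {n : Type*} [Fintype n] [DecidableEq n]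
    (A B : Matrix n n ℝ) (hA : A.IsSymm) (hB : B.IsSymm) (hAB : A * B = B * A)
    (u : n) (τ : ℝ) (hτ : 0 < τ) (μ : ℂ) (hμ : ‖μ‖ = 1)
    (hX : (NormedSpace.exp ((Complex.I * (τ : ℂ)) • A.map Complex.ofReal)).mulVec
        (Pi.single u 1 : n → ℂ) = μ • (Pi.single u 1 : n → ℂ))
    (hY : (NormedSpace.exp ((Complex.I * (τ : ℂ)) • B.map Complex.ofReal)).mulVec
          (Pi.single u 1 : n → ℂ) = Complex.I • (Pi.single u 1 : n → ℂ) ∨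
        (NormedSpace.exp ((Complex.I * (τ : ℂ)) • B.map Complex.ofReal)).mulVec
          (Pi.single u 1 : n → ℂ) = (-Complex.I) • (Pi.single u 1 : n → ℂ)) :
    ∃ γ : ℂ, ‖γ‖ = 1 ∧
      (NormedSpace.exp ((Complex.I * (τ : ℂ)) •
          (Matrix.fromBlocks A B B A).map Complex.ofReal)).mulVec
        (Pi.single (Sum.inl u) 1 : n ⊕ n → ℂ)
        = γ • (Pi.single (Sum.inr u) 1 : n ⊕ n → ℂ) := by
  set s : n → ℂ := Pi.single u 1 with hs
  set X : Matrix n n ℂ := (Complex.I * (τ : ℂ)) • A.map Complex.ofReal with hXdef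
  set Y : Matrix n n ℂ := (Complex.I * (τ : ℂ)) • B.map Complex.ofReal with hYdef
  -- the phase of Y
  obtain ⟨c, hc, hcc, hcabs⟩ : ∃ c : ℂ,
      (NormedSpace.exp Y).mulVec s = c • s ∧ c * c = -1 ∧ ‖c‖ = 1 := by
    rcases hY with h | h
    · exact ⟨Complex.I, h, Complex.I_mul_I, Complex.norm_I⟩
    · exact ⟨-Complex.I, h, by simp [Complex.I_mul_I], by simp⟩
  -- commutation
  have hC : Commute X Y := by
    have hab : A.map Complex.ofReal * B.map Complex.ofReal
        = B.map Complex.ofReal * A.map Complex.ofReal := by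
      have := congrArg (fun M : Matrix n n ℝ => M.map (Complex.ofRealHom : ℝ →+* ℂ)) hAB
      simp only [Matrix.map_mul] at this; exact this
    exact (Commute.smul_left (Commute.smul_right hab _) _)
  -- exp(-Y) acts with inverse phase
  have hinv : (NormedSpace.exp (-Y)).mulVec s = (-c) • s := by
    have h1 : NormedSpace.exp (-Y) * NormedSpace.exp Y = 1 := by
      rw [← Matrix.exp_add_of_commute (-Y) Y (Commute.neg_left (Commute.refl Y))]
      simp [NormedSpace.exp_zero]
    have h2 : (NormedSpace.exp (-Y)).mulVec ((NormedSpace.exp Y).mulVec s) = s := by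
      rw [Matrix.mulVec_mulVec, h1, Matrix.one_mulVec]
    rw [hc, Matrix.mulVec_smul] at h2
    calc (NormedSpace.exp (-Y)).mulVec s
        = (-(c*c)) • (NormedSpace.exp (-Y)).mulVec s := by rw [hcc]; simp
      _ = (-c) • (c • (NormedSpace.exp (-Y)).mulVec s) := by rw [smul_smul]; ring_nf
      _ = (-c) • s := by rw [h2]
  -- exp of sums
  have hP : (NormedSpace.exp (X + Y)).mulVec s = (c * μ) • s := by
    rw [Matrix.exp_add_of_commute X Y hC, ← Matrix.mulVec_mulVec, hc,
      Matrix.mulVec_smul, hX, smul_smul]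
  have hQ : (NormedSpace.exp (X - Y)).mulVec s = (-(c * μ)) • s := by
    have : X - Y = X + (-Y) := sub_eq_add_neg X Y
    rw [this, Matrix.exp_add_of_commute X (-Y) hC.neg_right, ← Matrix.mulVec_mulVec,
      hinv, Matrix.mulVec_smul, hX, smul_smul]
    ring_nf
  -- the conjugating matrix
  set T : Matrix (n ⊕ n) (n ⊕ n) ℂ := Matrix.fromBlocks 1 1 1 (-1) with hT
  set D : Matrix (n ⊕ n) (n ⊕ n) ℂ := Matrix.fromBlocks (X + Y) 0 0 (X - Y) with hD
  have hTT : T * T = (2 : ℂ) • 1 := by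
    rw [hT, Matrix.fromBlocks_multiply, ← Matrix.fromBlocks_one, Matrix.fromBlocks_smul]
    exact Matrix.fromBlocks_inj.mpr ⟨by simp [two_smul], by simp, by simp, by simp [two_smul]⟩
  have hTT' : T * ((2 : ℂ)⁻¹ • T) = 1 := by
    rw [Matrix.mul_smul, hTT, smul_smul]
    norm_num
  have hTT'' : ((2 : ℂ)⁻¹ • T) * T = 1 := by
    rw [Matrix.smul_mul, hTT, smul_smul]
    norm_num
  have hTunit : IsUnit T := ⟨⟨T, (2 : ℂ)⁻¹ • T, hTT', hTT''⟩, rfl⟩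
  have hTinv : T⁻¹ = (2 : ℂ)⁻¹ • T := Matrix.inv_eq_right_inv hTT'
  -- the big matrix is the conjugate of the block-diagonal one
  have hM : (Complex.I * (τ : ℂ)) • (Matrix.fromBlocks A B B A).map Complex.ofReal
      = T⁻¹ * D * T := by
    have h1 : (Matrix.fromBlocks A B B A).map Complex.ofReal
        = Matrix.fromBlocks (A.map Complex.ofReal) (B.map Complex.ofReal)
            (B.map Complex.ofReal) (A.map Complex.ofReal) := Matrix.fromBlocks_map A B B A _
    rw [h1]
    have h2 : (Complex.I * (τ : ℂ)) • Matrix.fromBlocks (A.map Complex.ofReal)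
        (B.map Complex.ofReal) (B.map Complex.ofReal) (A.map Complex.ofReal)
        = Matrix.fromBlocks X Y Y X := by
      rw [Matrix.fromBlocks_smul]
    rw [h2, hTinv, Matrix.smul_mul, Matrix.smul_mul, hT, hD,
      Matrix.fromBlocks_multiply, Matrix.fromBlocks_multiply, Matrix.fromBlocks_smul]
    refine Matrix.fromBlocks_inj.mpr ⟨?_, ?_, ?_, ?_⟩ <;> simp <;> module
  refine ⟨c * μ, ?_, ?_⟩
  · rw [norm_mul, hcabs, hμ, one_mul]
  · have hv1 : T *ᵥ Sum.elim s (0 : n → ℂ) = Sum.elim s s := by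
      rw [hT, Matrix.fromBlocks_mulVec]
      simp [Matrix.one_mulVec, Matrix.mulVec_zero]
    have hv2 : (Matrix.fromBlocks (NormedSpace.exp (X + Y)) 0 0
        (NormedSpace.exp (X - Y))) *ᵥ Sum.elim s s
        = Sum.elim ((c * μ) • s) ((-(c * μ)) • s) := by
      rw [Matrix.fromBlocks_mulVec]
      simp [hP, hQ, Matrix.zero_mulVec]
    have hv3 : T⁻¹ *ᵥ Sum.elim ((c * μ) • s) ((-(c * μ)) • s)
        = (c * μ) • Sum.elim (0 : n → ℂ) s := by
      rw [hTinv, Matrix.smul_mulVec, hT, Matrix.fromBlocks_mulVec]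
      funext x
      cases x with
      | inl i =>
          simp [Matrix.one_mulVec, Matrix.neg_mulVec]
      | inr i =>
          simp [Matrix.one_mulVec, Matrix.neg_mulVec]
          ring
    rw [hM, Matrix.exp_conj' T D hTunit, hD, exp_fromBlocks_diag, single_inl_eq,
      single_inr_eq, ← Matrix.mulVec_mulVec, ← Matrix.mulVec_mulVec, hv1, hv2, hv3]
end

section
/- The complete graph K_n with n > 2 vertices admits no perfect state transfer: for all positive times t, distinct vertices u, v, and complex λ, exp(it(J−I)) e_u ≠ λ e_v. -/
open Matrix

/-- Auxiliary: permutation invariance of the matrix exponential of `it(J-I)`. -/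
theorem stmt_17_aux {n : Type*} [Fintype n] [DecidableEq n] (c : ℂ)
    (σ : Equiv.Perm n) (x y : n) :
    (NormedSpace.exp (c •
        ((Matrix.of fun _ _ => (1 : ℝ)) - 1 : Matrix n n ℝ).map Complex.ofReal)) (σ x) (σ y) =
    (NormedSpace.exp (c •
        ((Matrix.of fun _ _ => (1 : ℝ)) - 1 : Matrix n n ℝ).map Complex.ofReal)) x y := by
  set A : Matrix n n ℂ :=
    c • ((Matrix.of fun _ _ => (1 : ℝ)) - 1 : Matrix n n ℝ).map Complex.ofReal with hAdef
  set M : Matrix n n ℂ := NormedSpace.exp A with hMdef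
  have hswap : ∀ a b : n, A (σ a) (σ b) = A a b := by
    intro a b
    simp [hAdef, Matrix.sub_apply, Matrix.one_apply, Matrix.map_apply]
  have hdet : IsUnit (σ.permMatrix ℂ).det := by
    rw [Matrix.det_permutation]
    rcases Int.units_eq_one_or (Equiv.Perm.sign σ) with h | h <;> simp [h]
  have hP : IsUnit (σ.permMatrix ℂ) := (Matrix.isUnit_iff_isUnit_det _).mpr hdet
  have hAP : σ.permMatrix ℂ * A = A * σ.permMatrix ℂ := by
    rw [PEquiv.toMatrix_toPEquiv_mul, PEquiv.mul_toMatrix_toPEquiv]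
    ext a b
    simp only [Matrix.submatrix_apply, id]
    have := hswap a (σ.symm b)
    simpa using this
  have hconj := Matrix.exp_conj (σ.permMatrix ℂ) A hP
  have h1 : σ.permMatrix ℂ * A * (σ.permMatrix ℂ)⁻¹ = A := by
    rw [hAP, Matrix.mul_assoc, Matrix.mul_nonsing_inv _ hdet, Matrix.mul_one]
  rw [h1] at hconj
  have hMP : M * σ.permMatrix ℂ = σ.permMatrix ℂ * M := by
    calc M * σ.permMatrix ℂ
        = σ.permMatrix ℂ * M * (σ.permMatrix ℂ)⁻¹ * σ.permMatrix ℂ := by rw [← hconj]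
      _ = σ.permMatrix ℂ * M * ((σ.permMatrix ℂ)⁻¹ * σ.permMatrix ℂ) := by
          rw [Matrix.mul_assoc]
      _ = σ.permMatrix ℂ * M := by rw [Matrix.nonsing_inv_mul _ hdet, Matrix.mul_one]
  rw [PEquiv.mul_toMatrix_toPEquiv, PEquiv.toMatrix_toPEquiv_mul] at hMP
  have := congrFun (congrFun hMP x) (σ y)
  simpa using this.symm

/-- The complete graph `K_n` with more than two vertices admits no perfect
state transfer: for all positive times `t`, distinct vertices `u ≠ v`, and
complex `λ`, `exp(it(J−I)) e_u ≠ λ e_v`. -/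
theorem stmt_17 {n : Type*} [Fintype n] [DecidableEq n]
    (hn : 2 < Fintype.card n) (t : ℝ) (ht : 0 < t) (u v : n) (huv : u ≠ v) (lam : ℂ) :
    (NormedSpace.exp ((Complex.I * (t : ℂ)) •
        ((Matrix.of fun _ _ => (1 : ℝ)) - 1 : Matrix n n ℝ).map Complex.ofReal)).mulVec
      (Pi.single u 1 : n → ℂ) ≠ lam • (Pi.single v 1 : n → ℂ) := by
  intro h
  set A : Matrix n n ℂ := (Complex.I * (t : ℂ)) •
      ((Matrix.of fun _ _ => (1 : ℝ)) - 1 : Matrix n n ℝ).map Complex.ofReal with hAdef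
  set M : Matrix n n ℂ := NormedSpace.exp A with hMdef
  have key : ∀ (σ : Equiv.Perm n) (x y : n), M (σ x) (σ y) = M x y :=
    fun σ x y => stmt_17_aux (Complex.I * (t : ℂ)) σ x y
  -- extract column entries
  have hcol : ∀ x : n, M x u = lam * (Pi.single v 1 : n → ℂ) x := by
    intro x
    have := congrFun h x
    simpa [Matrix.mulVec_single] using this
  -- find a third vertex
  obtain ⟨w, hw⟩ : ∃ w : n, w ∉ ({u, v} : Finset n) := by
    by_contra hc
    push_neg at hc
    have : Fintype.card n ≤ ({u, v} : Finset n).card := by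
      apply Finset.card_le_card_of_injOn id (fun x _ => hc x)
      exact fun a _ b _ hab => hab
    have : ({u, v} : Finset n).card ≤ 2 := Finset.card_insert_le _ _ |>.trans (by simp)
    omega
  simp only [Finset.mem_insert, Finset.mem_singleton, not_or] at hw
  obtain ⟨hwu, hwv⟩ := hw
  have huu : M u u = 0 := by simpa [Pi.single_apply, huv] using hcol u
  have hwu0 : M w u = 0 := by simpa [Pi.single_apply, hwv] using hcol w
  -- all entries of M vanish
  have hM0 : M = 0 := by
    ext x y
    rcases eq_or_ne x y with rfl | hxy
    · have := key (Equiv.swap u x) u u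
      rw [Equiv.swap_apply_left] at this
      rw [this, huu]; rfl
    · -- build σ with σ w = x, σ u = y
      set σ₁ := Equiv.swap w x with hσ₁
      have ha : σ₁ u ≠ x := by
        intro hcon
        have : σ₁ u = σ₁ w := by rw [hcon, hσ₁, Equiv.swap_apply_left]
        exact hwu (σ₁.injective this).symm
      set σ₂ := Equiv.swap (σ₁ u) y with hσ₂
      set σ := σ₁.trans σ₂ with hσ
      have hσw : σ w = x := by
        have h2 : σ₂ x = x := Equiv.swap_apply_of_ne_of_ne (Ne.symm ha) hxy
        have hσ1w : σ₁ w = x := Equiv.swap_apply_left _ _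
        rw [hσ, Equiv.trans_apply, hσ1w]
        exact h2
      have hσu : σ u = y := by
        rw [hσ, Equiv.trans_apply, hσ₂]
        exact Equiv.swap_apply_left _ _
      have := key σ w u
      rw [hσw, hσu] at this
      rw [this, hwu0]; rfl
  have hunit : IsUnit M := Matrix.isUnit_exp A
  rw [hM0] at hunit
  obtain ⟨x, hx⟩ := hunit
  have h01 : (0 : Matrix n n ℂ) * (x⁻¹ : (Matrix n n ℂ)ˣ) = 1 := by
    rw [← hx]; exact x.mul_inv
  rw [zero_mul] at h01
  have := congrFun (congrFun h01 u) u
  simp [Matrix.one_apply] at this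
end

section
/- For the complete graph K_n (adjacency matrix J − I), the diagonal entry of the transition matrix satisfies |[exp(iτ(J−I))]_{u,u}| = 1 if and only if τ is an integer multiple of 2π/n, and in that case [exp(iτ(J−I))]_{u,u} = e^{−iτ}. -/
open Matrix

/-- Exponential of a scalar multiple of an idempotent matrix. -/
theorem exp_smul_idem {n : Type*} [Fintype n] [DecidableEq n]
    (P : Matrix n n ℂ) (hP : P * P = P) (c : ℂ) :
    NormedSpace.exp (c • P) = 1 + (Complex.exp c - 1) • P := by
  letI : SeminormedRing (Matrix n n ℂ) := Matrix.linftyOpSemiNormedRing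
  letI : NormedRing (Matrix n n ℂ) := Matrix.linftyOpNormedRing
  letI : NormedAlgebra ℂ (Matrix n n ℂ) := Matrix.linftyOpNormedAlgebra
  have hPpow : ∀ k : ℕ, P ^ (k + 1) = P := by
    intro k
    induction k with
    | zero => simp
    | succ m ih => rw [pow_succ, ih, hP]
  have hpow : ∀ k : ℕ, (c • P) ^ (k + 1) = c ^ (k + 1) • P := by
    intro k
    rw [smul_pow, hPpow]
  have hsum : Summable fun k : ℕ => ((k.factorial : ℂ)⁻¹) • (c • P) ^ k :=
    NormedSpace.expSeries_summable' (c • P)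
  have hscalar : Summable fun k : ℕ => ((k.factorial : ℂ)⁻¹) • c ^ k :=
    NormedSpace.expSeries_summable' c
  simp only [NormedSpace.exp_eq_tsum ℂ]
  rw [Summable.tsum_eq_zero_add hsum]
  have h0 : ((0:ℕ).factorial : ℂ)⁻¹ • (c • P) ^ 0 = (1 : Matrix n n ℂ) := by simp
  rw [h0]
  congr 1
  have : (fun k : ℕ => (((k + 1).factorial : ℂ)⁻¹) • (c • P) ^ (k + 1))
      = fun k : ℕ => ((((k + 1).factorial : ℂ)⁻¹) * c ^ (k + 1)) • P := by
    funext k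
    rw [hpow, smul_smul]
  rw [this]
  have hscalar' : Summable fun k : ℕ => (((k + 1).factorial : ℂ)⁻¹) * c ^ (k + 1) := by
    have := (summable_nat_add_iff 1).2 hscalar
    simpa [smul_eq_mul] using this
  rw [Summable.tsum_smul_const hscalar']
  congr 1
  have hexp : Complex.exp c = ∑' k : ℕ, ((k.factorial : ℂ)⁻¹) • c ^ k := by
    rw [Complex.exp_eq_exp_ℂ, NormedSpace.exp_eq_tsum ℂ]
  rw [hexp, Summable.tsum_eq_zero_add hscalar]
  simp [smul_eq_mul]

/-- For the complete graph `K_n` (adjacency matrix `J − I`, `n ≥ 2`), the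
diagonal entry of the transition matrix satisfies `|[exp(iτ(J−I))]_{uu}| = 1`
iff `τ` is an integer multiple of `2π/n`, and in that case
`[exp(iτ(J−I))]_{uu} = e^{−iτ}`. -/
theorem stmt_18 {n : Type*} [Fintype n] [DecidableEq n]
    (hn : 2 ≤ Fintype.card n) (τ : ℝ) (u : n) :
    (‖(NormedSpace.exp ((Complex.I * (τ : ℂ)) •
          ((Matrix.of fun _ _ => (1 : ℝ)) - 1 : Matrix n n ℝ).map Complex.ofReal)) u u‖ = 1
      ↔ ∃ k : ℤ, τ = k * (2 * Real.pi / Fintype.card n)) ∧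
    ((∃ k : ℤ, τ = k * (2 * Real.pi / Fintype.card n)) →
      (NormedSpace.exp ((Complex.I * (τ : ℂ)) •
          ((Matrix.of fun _ _ => (1 : ℝ)) - 1 : Matrix n n ℝ).map Complex.ofReal)) u u
        = Complex.exp (-Complex.I * (τ : ℂ))) := by
  set N : ℕ := Fintype.card n with hNdef
  have hN0 : 0 < N := lt_of_lt_of_le two_pos hn
  have hNR : (0:ℝ) < (N:ℝ) := by exact_mod_cast hN0
  have hNC : (N:ℂ) ≠ 0 := by exact_mod_cast hN0.ne'
  set c : ℂ := Complex.I * (τ : ℂ) with hc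
  set J : Matrix n n ℂ := Matrix.of fun _ _ => (1:ℂ) with hJ
  -- the mapped matrix is J - 1
  have hmap : ((Matrix.of fun _ _ => (1 : ℝ)) - 1 : Matrix n n ℝ).map Complex.ofReal
      = J - 1 := by
    ext i j
    simp [Matrix.map_apply, Matrix.one_apply, hJ]
    split_ifs <;> simp
  -- P = J / N is idempotent
  set P : Matrix n n ℂ := ((N:ℂ)⁻¹) • J with hPdef
  have hJJ : J * J = (N:ℂ) • J := by
    ext i j
    simp only [Matrix.mul_apply, hJ, Matrix.smul_apply, Matrix.of_apply, one_mul,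
      Finset.sum_const, Finset.card_univ, nsmul_eq_mul, mul_one, smul_eq_mul]
    rfl
  have hPP : P * P = P := by
    rw [hPdef, smul_mul_assoc, mul_smul_comm, hJJ, smul_smul, smul_smul]
    congr 1
    field_simp
  -- split the exponential
  have hsplit : c • (J - 1) = (c * N) • P + (-c) • (1 : Matrix n n ℂ) := by
    rw [hPdef, smul_smul, mul_assoc, mul_inv_cancel₀ hNC, mul_one, smul_sub]
    module
  have hcomm : Commute ((c * N) • P) ((-c) • (1 : Matrix n n ℂ)) :=
    (Commute.one_right ((c * N) • P)).smul_right (-c)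
  have hexpJ : NormedSpace.exp ((c * N) • P)
      = 1 + (Complex.exp (c * N) - 1) • P := exp_smul_idem P hPP (c * N)
  have hone : (-c) • (1 : Matrix n n ℂ) = Matrix.diagonal (fun _ => -c) := by
    ext i j
    by_cases h : i = j <;> simp [h, Matrix.one_apply]
  have hexp1 : NormedSpace.exp ((-c) • (1 : Matrix n n ℂ))
      = Matrix.diagonal (fun _ => Complex.exp (-c)) := by
    rw [hone, Matrix.exp_diagonal, Pi.exp_def]
    congr 1
    funext _
    rw [Complex.exp_eq_exp_ℂ]
  have hentry : (NormedSpace.exp (c • (J - 1))) u u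
      = (1 + (Complex.exp (c * N) - 1) / N) * Complex.exp (-c) := by
    rw [hsplit, Matrix.exp_add_of_commute _ _ hcomm, hexpJ, hexp1,
      Matrix.mul_diagonal]
    congr 1
    simp [Matrix.add_apply, Matrix.one_apply, hPdef, Matrix.smul_apply, hJ,
      smul_eq_mul, div_eq_mul_inv, mul_comm]
  rw [hmap]
  -- express exp(c*N)
  have hcN : c * N = Complex.I * ((τ * N : ℝ) : ℂ) := by
    rw [hc]; push_cast; ring
  set θ : ℝ := τ * N with hθ
  have hecN : Complex.exp (c * N) = Complex.cos θ + Complex.sin θ * Complex.I := by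
    rw [hcN, mul_comm, Complex.exp_mul_I]
  -- the key complex number
  set z : ℂ := 1 + (Complex.exp (c * N) - 1) / N with hz
  have hzform : z = ((1 + (Real.cos θ - 1) / N : ℝ) : ℂ)
      + ((Real.sin θ / N : ℝ) : ℂ) * Complex.I := by
    rw [hz, hecN]
    push_cast
    field_simp
    ring
  have habsexp : ‖Complex.exp (-c)‖ = 1 := by
    rw [hc]
    have : -(Complex.I * (τ:ℂ)) = (-τ : ℝ) * Complex.I := by push_cast; ring
    rw [this, Complex.norm_exp_ofReal_mul_I]
  -- equivalence between multiples and cos θ = 1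
  have hmult : (∃ k : ℤ, τ = k * (2 * Real.pi / N)) ↔ Real.cos θ = 1 := by
    rw [Real.cos_eq_one_iff]
    constructor
    · rintro ⟨k, hk⟩
      exact ⟨k, by rw [hθ, hk]; field_simp⟩
    · rintro ⟨k, hk⟩
      refine ⟨k, ?_⟩
      have : τ = θ / N := by rw [hθ]; field_simp
      rw [this, ← hk]
      field_simp
  constructor
  · -- the abs iff
    rw [hentry, norm_mul, habsexp, mul_one, hmult, hzform,
      Complex.norm_add_mul_I, Real.sqrt_eq_one]
    have hsc : Real.sin θ ^ 2 + Real.cos θ ^ 2 = 1 := Real.sin_sq_add_cos_sq θ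
    have hN2 : (2:ℝ) ≤ (N:ℝ) := by exact_mod_cast hn
    constructor
    · intro h
      field_simp at h
      by_contra hne
      have hlt : Real.cos θ < 1 := lt_of_le_of_ne (Real.cos_le_one θ) hne
      nlinarith [h, hsc, hN2,
        mul_pos (show (0:ℝ) < (N:ℝ) - 1 by linarith) (show (0:ℝ) < 1 - Real.cos θ by linarith)]
    · intro h
      have hs : Real.sin θ = 0 := by nlinarith [hsc, h]
      rw [h, hs]
      simp
  · -- the value
    intro hk
    have hcos : Real.cos θ = 1 := hmult.mp hk
    have hsin : Real.sin θ = 0 := by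
      nlinarith [Real.sin_sq_add_cos_sq θ, hcos]
    have hE : Complex.exp (c * N) = 1 := by
      rw [hecN, ← Complex.ofReal_cos, ← Complex.ofReal_sin, hcos, hsin]; simp
    rw [hentry, hz, hE]
    simp [hc]
end
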